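/- arXiv:1512.06718 — 8 statements merged into one kernel-verified Lean document; each statement's English description precedes it below -/
import Mathlib

section
/- Fix a natural number q₀. Then, as p → ∞, the ratio C(p, q₀) / ( (1/3)·√(2/(3π))·(1/q₀!)·(16/3)^{q₀} · p^{q₀ − 3/2} · (256/27)^p ) tends to 1; that is, C(p, q₀) is asymptotically equivalent to (1/3)·√(2/(3π))·(1/q₀!)·(16/3)^{q₀} · p^{q₀ − 3/2} · (4⁴/3³)^p. -/
open Filter Real

/-- The melonic coefficient `C(p,q) = (4p + 2q)! / (p! q! (3p + q + 1)!)`,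
regarded as a real number. -/
noncomputable def melonC (p q : ℕ) : ℝ :=
  (Nat.factorial (4 * p + 2 * q) : ℝ) /
    ((Nat.factorial p : ℝ) * (Nat.factorial q : ℝ) * (Nat.factorial (3 * p + q + 1) : ℝ))

lemma factorial_eq_stirling (n : ℕ) (hn : 1 ≤ n) :
    (Nat.factorial n : ℝ) =
      Stirling.stirlingSeq n * (Real.sqrt (2 * n) * ((n : ℝ) / Real.exp 1) ^ n) := by
  have hpos : 0 < Real.sqrt (2 * n) * ((n : ℝ) / Real.exp 1) ^ n := by
    have : (0:ℝ) < n := by exact_mod_cast hn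
    positivity
  rw [Stirling.stirlingSeq, div_mul_cancel₀ _ hpos.ne']

lemma melonC_ratio_eq (q p : ℕ) (hp : 1 ≤ p) :
    melonC p q /
        ((1 / 3) * Real.sqrt (2 / (3 * Real.pi)) * (1 / (Nat.factorial q : ℝ)) *
          (16 / 3) ^ q * (p : ℝ) ^ ((q : ℝ) - 3 / 2) * (256 / 27 : ℝ) ^ p) =
      Stirling.stirlingSeq (4*p+2*q) / (Stirling.stirlingSeq p * Stirling.stirlingSeq (3*p+q+1)) *
      (Real.sqrt (2*(4*(p:ℝ)+2*q)) * Real.sqrt p /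
          (Real.sqrt (2*(p:ℝ)) * Real.sqrt (2*(3*(p:ℝ)+q+1))) *
        ((1 + (q:ℝ)/(2*(p:ℝ)))^(4*p+2*q) *
          (((1 + ((q:ℝ)+1)/(3*(p:ℝ)))^(3*p+q+1))⁻¹ *
            (16 ^ q * Real.exp 1 /
              (Real.exp 1 ^ q * 3 ^ (q+1) * (Nat.factorial q : ℝ) *
                ((1 / 3) * Real.sqrt (2 / (3 * Real.pi)) * (1 / (Nat.factorial q : ℝ)) * (16 / 3) ^ q)))))) := by
  have hP : (0:ℝ) < p := by exact_mod_cast hp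
  have hrp : (p : ℝ) ^ ((q : ℝ) - 3 / 2) = (p:ℝ)^q / ((p:ℝ) * Real.sqrt p) := by
    rw [Real.rpow_sub hP, Real.rpow_natCast]
    congr 1
    rw [show ((3:ℝ)/2) = 1 + 1/2 by norm_num, Real.rpow_add hP, Real.rpow_one,
      ← Real.sqrt_eq_rpow]
  have hsp : 0 < Stirling.stirlingSeq p := by
    have := Stirling.stirlingSeq'_pos (p-1)
    rwa [Nat.sub_add_cancel hp] at this
  have hsM : 0 < Stirling.stirlingSeq (3*p+q+1) := Stirling.stirlingSeq'_pos (3*p+q)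
  have hq : (0:ℝ) < (Nat.factorial q : ℝ) := by exact_mod_cast Nat.factorial_pos q
  have hsqP : (0:ℝ) < Real.sqrt p := Real.sqrt_pos.mpr hP
  have hsq2P : (0:ℝ) < Real.sqrt (2*(p:ℝ)) := Real.sqrt_pos.mpr (by positivity)
  have hsqM : (0:ℝ) < Real.sqrt (2*(3*(p:ℝ)+(q:ℝ)+1)) := Real.sqrt_pos.mpr (by positivity)
  have hsqpi : (0:ℝ) < Real.sqrt (2/(3*π)) := Real.sqrt_pos.mpr (by positivity)
  have hexp1 : (0:ℝ) < Real.exp 1 := Real.exp_pos _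
  simp only [melonC]
  rw [factorial_eq_stirling (4*p+2*q) (by omega), factorial_eq_stirling p hp,
    factorial_eq_stirling (3*p+q+1) (by omega), hrp]
  push_cast
  rw [show (1 + (q:ℝ)/(2*(p:ℝ))) = (4*(p:ℝ)+2*(q:ℝ))/(4*(p:ℝ)) by field_simp; ring,
    show (1 + ((q:ℝ)+1)/(3*(p:ℝ))) = (3*(p:ℝ)+(q:ℝ)+1)/(3*(p:ℝ)) by field_simp; ring,
    show (256/27:ℝ)^p = 4^(4*p)/3^(3*p) by
      rw [div_pow, show (256:ℝ) = 4^4 by norm_num, show (27:ℝ) = 3^3 by norm_num,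
        ← pow_mul, ← pow_mul],
    show (16/3:ℝ)^q = 4^(2*q)/3^q by
      rw [div_pow, show (16:ℝ) = 4^2 by norm_num, ← pow_mul],
    show (16:ℝ)^q = 4^(2*q) by rw [show (16:ℝ) = 4^2 by norm_num, ← pow_mul]]
  set E := Real.exp 1 with hE
  set sA := Real.sqrt (2*(4*(p:ℝ)+2*(q:ℝ))) with hsA
  set sB := Real.sqrt (2*(p:ℝ)) with hsB
  set sC := Real.sqrt (2*(3*(p:ℝ)+(q:ℝ)+1)) with hsC
  set sD := Real.sqrt (p:ℝ) with hsD
  set sE := Real.sqrt (2/(3*π)) with hsE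
  set s1 := Stirling.stirlingSeq p with hs1
  set s2 := Stirling.stirlingSeq (3*p+q+1) with hs2
  have h4P : (0:ℝ) < 4*(p:ℝ)+2*(q:ℝ) := by positivity
  have h3P : (0:ℝ) < 3*(p:ℝ)+(q:ℝ)+1 := by positivity
  field_simp
  simp only [div_pow, mul_pow]
  field_simp
  ring

/-- For fixed `q₀`, as `p → ∞`,
`C(p, q₀) ∼ (1/3)·√(2/(3π))·(1/q₀!)·(16/3)^{q₀} · p^{q₀ − 3/2} · (4⁴/3³)^p`. -/
theorem melonC_asymptotic_fixed_q (q₀ : ℕ) :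
    Tendsto (fun p : ℕ =>
        melonC p q₀ /
          ((1 / 3) * Real.sqrt (2 / (3 * Real.pi)) * (1 / (Nat.factorial q₀ : ℝ)) *
            (16 / 3) ^ q₀ * (p : ℝ) ^ ((q₀ : ℝ) - 3 / 2) * (256 / 27 : ℝ) ^ p))
      atTop (nhds 1) := by
  set q := q₀ with hqdef
  set K : ℝ := 16 ^ q * Real.exp 1 /
      (Real.exp 1 ^ q * 3 ^ (q+1) * (Nat.factorial q : ℝ) *
        ((1 / 3) * Real.sqrt (2 / (3 * Real.pi)) * (1 / (Nat.factorial q : ℝ)) * (16 / 3) ^ q))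
      with hK
  set T : ℕ → ℝ := fun p =>
    Stirling.stirlingSeq (4*p+2*q) / (Stirling.stirlingSeq p * Stirling.stirlingSeq (3*p+q+1)) *
      (Real.sqrt (2*(4*(p:ℝ)+2*q)) * Real.sqrt p /
          (Real.sqrt (2*(p:ℝ)) * Real.sqrt (2*(3*(p:ℝ)+q+1))) *
        ((1 + (q:ℝ)/(2*(p:ℝ)))^(4*p+2*q) *
          (((1 + ((q:ℝ)+1)/(3*(p:ℝ)))^(3*p+q+1))⁻¹ * K))) with hT
  -- the limit of `T`
  have hs := Stirling.tendsto_stirlingSeq_sqrt_pi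
  have hπ : Real.sqrt π ≠ 0 := (Real.sqrt_pos.mpr Real.pi_pos).ne'
  have hsN : Tendsto (fun p : ℕ => Stirling.stirlingSeq (4*p+2*q)) atTop (nhds (Real.sqrt π)) :=
    hs.comp (tendsto_atTop_mono (fun n => by simp only [id_eq]; omega) tendsto_id)
  have hsM : Tendsto (fun p : ℕ => Stirling.stirlingSeq (3*p+q+1)) atTop (nhds (Real.sqrt π)) :=
    hs.comp (tendsto_atTop_mono (fun n => by simp only [id_eq]; omega) tendsto_id)
  have hT1 := hsN.div (hs.mul hsM) (mul_ne_zero hπ hπ)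
  have hrat : Tendsto (fun p : ℕ =>
      (2*(4*(p:ℝ)+2*q)) * (p:ℝ) / ((2*(p:ℝ)) * (2*(3*(p:ℝ)+q+1)))) atTop (nhds (2/3)) := by
    have hnum : Tendsto (fun p : ℕ => 8 + (4*(q:ℝ))/p) atTop (nhds 8) := by
      simpa using (tendsto_const_div_atTop_nhds_zero_nat (4*(q:ℝ))).const_add 8
    have hden : Tendsto (fun p : ℕ => 12 + (4*(q:ℝ)+4)/p) atTop (nhds 12) := by
      simpa using (tendsto_const_div_atTop_nhds_zero_nat (4*(q:ℝ)+4)).const_add 12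
    have := hnum.div hden (by norm_num)
    have h23 : (8:ℝ)/12 = 2/3 := by norm_num
    rw [h23] at this
    refine this.congr' ?_
    filter_upwards [eventually_ge_atTop 1] with p hp
    have hp0 : (0:ℝ) < p := by exact_mod_cast hp
    simp only [Pi.div_apply]
    field_simp
    ring
  have hT2 : Tendsto (fun p : ℕ =>
      Real.sqrt (2*(4*(p:ℝ)+2*q)) * Real.sqrt p /
        (Real.sqrt (2*(p:ℝ)) * Real.sqrt (2*(3*(p:ℝ)+q+1)))) atTop
      (nhds (Real.sqrt (2/3))) := by
    have hc := (Real.continuous_sqrt.tendsto (2/3)).comp hrat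
    refine hc.congr fun p => ?_
    have h1 : (0:ℝ) ≤ 2*(4*(p:ℝ)+2*q) := by positivity
    have h2 : (0:ℝ) ≤ 2*(p:ℝ) := by positivity
    simp only [Function.comp]
    rw [Real.sqrt_div (by positivity), Real.sqrt_mul h1, Real.sqrt_mul h2]
  have hb1 : Tendsto (fun p : ℕ => 1 + ((q:ℝ)/2)/(p:ℝ)) atTop (nhds 1) := by
    simpa using (tendsto_const_div_atTop_nhds_zero_nat ((q:ℝ)/2)).const_add 1
  have hT3 : Tendsto (fun p : ℕ => (1 + (q:ℝ)/(2*(p:ℝ)))^(4*p+2*q)) atTop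
      (nhds (Real.exp ((q:ℝ)/2)^4 * 1^(2*q))) := by
    have := ((Real.tendsto_one_add_div_pow_exp ((q:ℝ)/2)).pow 4).mul (hb1.pow (2*q))
    refine this.congr fun p => ?_
    rw [← pow_mul, ← pow_add, div_div]
    ring_nf
  have hb2 : Tendsto (fun p : ℕ => 1 + (((q:ℝ)+1)/3)/(p:ℝ)) atTop (nhds 1) := by
    simpa using (tendsto_const_div_atTop_nhds_zero_nat (((q:ℝ)+1)/3)).const_add 1
  have hT4 : Tendsto (fun p : ℕ => (1 + ((q:ℝ)+1)/(3*(p:ℝ)))^(3*p+q+1)) atTop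
      (nhds (Real.exp (((q:ℝ)+1)/3)^3 * 1^(q+1))) := by
    have := ((Real.tendsto_one_add_div_pow_exp (((q:ℝ)+1)/3)).pow 3).mul (hb2.pow (q+1))
    refine this.congr fun p => ?_
    rw [← pow_mul, ← pow_add, div_div]
    ring_nf
  have hT4inv := hT4.inv₀ (by positivity)
  have hlimT : Tendsto T atTop (nhds
      ((Real.sqrt π / (Real.sqrt π * Real.sqrt π)) *
        (Real.sqrt (2/3) * ((Real.exp ((q:ℝ)/2)^4 * 1^(2*q)) *
          (((Real.exp (((q:ℝ)+1)/3)^3 * 1^(q+1)))⁻¹ * K))))) :=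
    hT1.mul (hT2.mul (hT3.mul (hT4inv.mul tendsto_const_nhds)))
  -- the limit value is `1`
  have hval : (Real.sqrt π / (Real.sqrt π * Real.sqrt π)) *
      (Real.sqrt (2/3) * ((Real.exp ((q:ℝ)/2)^4 * 1^(2*q)) *
        (((Real.exp (((q:ℝ)+1)/3)^3 * 1^(q+1)))⁻¹ * K))) = 1 := by
    have e1 : Real.exp ((q:ℝ)/2)^4 = Real.exp q * Real.exp q := by
      rw [← Real.exp_nat_mul, ← Real.exp_add]; congr 1; push_cast; ring
    have e2 : Real.exp (((q:ℝ)+1)/3)^3 = Real.exp q * Real.exp 1 := by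
      rw [← Real.exp_nat_mul, ← Real.exp_add]; congr 1; push_cast; ring
    have e3 : Real.exp 1 ^ q = Real.exp q := by
      rw [← Real.exp_nat_mul, mul_one]
    have hsq : Real.sqrt (2/(3*π)) = Real.sqrt (2/3) / Real.sqrt π := by
      rw [← Real.sqrt_div (by norm_num)]; congr 1; rw [div_div]
    have hπ' : (0:ℝ) < Real.sqrt π := Real.sqrt_pos.mpr Real.pi_pos
    have h23 : (0:ℝ) < Real.sqrt (2/3) := Real.sqrt_pos.mpr (by norm_num)
    have hq : (0:ℝ) < (Nat.factorial q : ℝ) := by exact_mod_cast Nat.factorial_pos q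
    have hexpq : (0:ℝ) < Real.exp q := Real.exp_pos _
    have hexp1 : (0:ℝ) < Real.exp 1 := Real.exp_pos _
    rw [hK, e1, e2, e3, hsq, one_pow, one_pow, div_pow]
    field_simp
    ring
  rw [hval] at hlimT
  refine hlimT.congr' ?_
  filter_upwards [eventually_ge_atTop 1] with p hp
  exact (melonC_ratio_eq q p hp).symm
end

section
/- Fix a natural number p₀. Then, as q → ∞, the ratio C(p₀, q) / ( (1/√π)·(1/p₀!)·16^{p₀} · q^{p₀ − 3/2} · 4^q ) tends to 1; that is, C(p₀, q) is asymptotically equivalent to (1/√π)·(1/p₀!)·16^{p₀} · q^{p₀ − 3/2} · 4^q. -/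
open Filter Real

lemma fact_shift (n k : ℕ) :
    (n + k).factorial = n.factorial * ∏ j ∈ Finset.range k, (n + j + 1) := by
  induction k with
  | zero => simp
  | succ k ih =>
    rw [Finset.prod_range_succ, ← mul_assoc, ← ih, ← Nat.add_assoc,
      Nat.factorial_succ, mul_comm]

lemma stirling_pos {n : ℕ} (hn : 1 ≤ n) : 0 < Stirling.stirlingSeq n := by
  obtain ⟨m, rfl⟩ := Nat.exists_eq_add_of_le hn
  simpa [Nat.add_comm] using Stirling.stirlingSeq'_pos m

lemma cb_formula (q : ℕ) (hq : 1 ≤ q) :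
    ((2 * q).factorial : ℝ) =
      ((q.factorial : ℝ))^2 * (Stirling.stirlingSeq (2*q) / (Stirling.stirlingSeq q)^2)
        * (4 ^ q / Real.sqrt q) := by
  set x : ℝ := (q : ℝ) with hxdef
  have hx : 0 < x := Nat.cast_pos.mpr hq
  have e1 : ((2*q).factorial : ℝ)
      = Stirling.stirlingSeq (2*q) * (Real.sqrt (2*(2*x)) * ((2*x)/Real.exp 1)^(2*q)) := by
    rw [Stirling.stirlingSeq]
    push_cast
    rw [div_mul_cancel₀]
    positivity
  have e2 : (q.factorial : ℝ)
      = Stirling.stirlingSeq q * (Real.sqrt (2*x) * (x/Real.exp 1)^q) := by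
    rw [Stirling.stirlingSeq]
    rw [div_mul_cancel₀]
    positivity
  have h1 : Real.sqrt (2*(2*x)) = 2 * Real.sqrt x := by
    rw [show 2*(2*x) = 2^2 * x by ring, Real.sqrt_mul (by positivity), Real.sqrt_sq (by norm_num)]
  have h2 : ((2*x)/Real.exp 1)^(2*q) = 4^q * ((x/Real.exp 1)^q)^2 := by
    rw [show (2*x)/Real.exp 1 = 2*(x/Real.exp 1) by ring, mul_pow, ← pow_mul,
      pow_mul 2 2 q, mul_comm 2 q, pow_mul]
    norm_num
  have hs1 : Stirling.stirlingSeq q ≠ 0 := (stirling_pos hq).ne'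
  have hsx : Real.sqrt x ≠ 0 := by positivity
  have hxx : Real.sqrt x * Real.sqrt x = x := Real.mul_self_sqrt hx.le
  have h3 : Real.sqrt (2*x) = Real.sqrt 2 * Real.sqrt x := Real.sqrt_mul (by norm_num) x
  rw [e1, e2, h1, h2, h3]
  field_simp
  ring_nf
  simp only [Real.sq_sqrt hx.le, Real.sq_sqrt (by norm_num : (0:ℝ) ≤ 2)]

lemma key_eq (p q : ℕ) (hq : 1 ≤ q) :
    melonC p q /
        ((1 / Real.sqrt Real.pi) * (1 / (Nat.factorial p : ℝ)) * 16 ^ p *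
          (q : ℝ) ^ ((p : ℝ) - 3 / 2) * (4 : ℝ) ^ q)
      = (Stirling.stirlingSeq (2*q) / (Stirling.stirlingSeq q)^2 * Real.sqrt Real.pi)
        * (∏ j ∈ Finset.range (4*p), ((2*(q:ℝ) + j + 1) / (2*(q:ℝ))))
        * (∏ j ∈ Finset.range (3*p+1), ((q:ℝ) / ((q:ℝ) + j + 1))) := by
  set x : ℝ := (q : ℝ) with hxdef
  have hx : 0 < x := Nat.cast_pos.mpr hq
  have hnum : ((4*p + 2*q).factorial : ℝ)
      = ((2*q).factorial : ℝ) * ∏ j ∈ Finset.range (4*p), (2*x + j + 1) := by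
    rw [show 4*p + 2*q = 2*q + 4*p by ring, fact_shift]
    push_cast
    ring
  have hden : ((3*p + q + 1).factorial : ℝ)
      = (q.factorial : ℝ) * ∏ j ∈ Finset.range (3*p+1), (x + j + 1) := by
    rw [show 3*p + q + 1 = q + (3*p+1) by ring, fact_shift]
    push_cast
    ring
  have hP1 : (∏ j ∈ Finset.range (4*p), ((2*x + j + 1) / (2*x)))
      = (∏ j ∈ Finset.range (4*p), (2*x + j + 1)) / (2*x)^(4*p) := by
    rw [Finset.prod_div_distrib, Finset.prod_const, Finset.card_range]
  have hP2 : (∏ j ∈ Finset.range (3*p+1), (x / (x + j + 1)))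
      = x^(3*p+1) / ∏ j ∈ Finset.range (3*p+1), (x + j + 1) := by
    rw [Finset.prod_div_distrib, Finset.prod_const, Finset.card_range]
  have hr : x ^ ((p : ℝ) - 3/2) = x^(4*p) / (x^(3*p+1) * Real.sqrt x) := by
    rw [Real.sqrt_eq_rpow, ← Real.rpow_natCast x (4*p), ← Real.rpow_natCast x (3*p+1),
      ← Real.rpow_add hx, ← Real.rpow_sub hx]
    congr 1
    push_cast
    ring
  have hpos1 : (0:ℝ) < ∏ j ∈ Finset.range (4*p), (2*x + j + 1) :=
    Finset.prod_pos fun j _ => by positivity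
  have hpos2 : (0:ℝ) < ∏ j ∈ Finset.range (3*p+1), (x + j + 1) :=
    Finset.prod_pos fun j _ => by positivity
  have hs1 : Stirling.stirlingSeq q ≠ 0 := (stirling_pos hq).ne'
  have hpf : (Nat.factorial p : ℝ) ≠ 0 := by positivity
  have hqf : (Nat.factorial q : ℝ) ≠ 0 := by positivity
  have hsx : Real.sqrt x ≠ 0 := by positivity
  have hspi : Real.sqrt Real.pi ≠ 0 := by positivity
  rw [melonC, hnum, hden, cb_formula q hq, hr, ← hxdef]
  simp only [Finset.prod_div_distrib, Finset.prod_const, Finset.card_range]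
  rw [show (2*x)^(4*p) = 16^p * x^(4*p) by rw [mul_pow, pow_mul]; norm_num]
  field_simp

lemma tend_base (c : ℝ) :
    Tendsto (fun q : ℕ => ((q:ℝ) + c) / (q:ℝ)) atTop (nhds 1) := by
  have h : Tendsto (fun q : ℕ => 1 + c / (q:ℝ)) atTop (nhds (1 + 0)) :=
    tendsto_const_nhds.add (tendsto_const_div_atTop_nhds_zero_nat c)
  rw [add_zero] at h
  refine h.congr' ?_
  filter_upwards [eventually_ge_atTop 1] with q hq
  have hq0 : (q:ℝ) ≠ 0 := by positivity
  field_simp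

lemma h2q : Tendsto (fun q : ℕ => 2 * q) atTop atTop :=
  tendsto_atTop_mono (fun n => by simp only [id_eq]; omega) tendsto_id (α := ℕ)

/-- For fixed `p₀`, as `q → ∞`,
`C(p₀, q) ∼ (1/√π)·(1/p₀!)·16^{p₀} · q^{p₀ − 3/2} · 4^q`. -/
theorem melonC_asymptotic_fixed_p (p₀ : ℕ) :
    Tendsto (fun q : ℕ =>
        melonC p₀ q /
          ((1 / Real.sqrt Real.pi) * (1 / (Nat.factorial p₀ : ℝ)) * 16 ^ p₀ *
            (q : ℝ) ^ ((p₀ : ℝ) - 3 / 2) * (4 : ℝ) ^ q))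
      atTop (nhds 1) := by
  have hpi : (0:ℝ) ≤ Real.pi := Real.pi_nonneg
  have hS : Tendsto
      (fun q : ℕ => Stirling.stirlingSeq (2*q) / (Stirling.stirlingSeq q)^2 * Real.sqrt Real.pi)
      atTop (nhds 1) := by
    have h2 : Tendsto (fun q : ℕ => Stirling.stirlingSeq (2*q)) atTop (nhds (Real.sqrt Real.pi)) :=
      Stirling.tendsto_stirlingSeq_sqrt_pi.comp h2q
    have h1 : Tendsto (fun q : ℕ => (Stirling.stirlingSeq q)^2) atTop
        (nhds ((Real.sqrt Real.pi)^2)) := Stirling.tendsto_stirlingSeq_sqrt_pi.pow 2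
    have hne : ((Real.sqrt Real.pi)^2 : ℝ) ≠ 0 := by positivity
    have := (h2.div h1 hne).mul_const (Real.sqrt Real.pi)
    convert this using 2
    · rfl
    rw [Real.sq_sqrt hpi, div_mul_eq_mul_div, Real.mul_self_sqrt hpi, div_self Real.pi_ne_zero]
  have hprod1 : Tendsto
      (fun q : ℕ => ∏ j ∈ Finset.range (4*p₀), ((2*(q:ℝ) + j + 1) / (2*(q:ℝ))))
      atTop (nhds 1) := by
    have := tendsto_finset_prod (Finset.range (4*p₀))
      (f := fun (j : ℕ) (q : ℕ) => (2*(q:ℝ) + j + 1) / (2*(q:ℝ)))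
      (a := fun _ => (1:ℝ)) (x := atTop) ?_
    · simpa using this
    · intro j _
      have := (tend_base ((j:ℝ) + 1)).comp h2q
      refine this.congr fun q => ?_
      simp only [Function.comp]
      push_cast
      ring_nf
  have hprod2 : Tendsto
      (fun q : ℕ => ∏ j ∈ Finset.range (3*p₀+1), ((q:ℝ) / ((q:ℝ) + j + 1)))
      atTop (nhds 1) := by
    have := tendsto_finset_prod (Finset.range (3*p₀+1))
      (f := fun (j : ℕ) (q : ℕ) => (q:ℝ) / ((q:ℝ) + j + 1))
      (a := fun _ => (1:ℝ)) (x := atTop) ?_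
    · simpa using this
    · intro j _
      have h := (tend_base ((j:ℝ) + 1)).inv₀ one_ne_zero
      rw [inv_one] at h
      refine h.congr fun q => ?_
      rw [inv_div]
      ring_nf
  have hmain := (hS.mul hprod1).mul hprod2
  rw [show (1:ℝ) * 1 * 1 = 1 by ring] at hmain
  refine hmain.congr' ?_
  filter_upwards [eventually_ge_atTop 1] with q hq
  exact (key_eq p₀ q hq).symm
end

section
/- Let g > 0 and μ > 0 be real numbers. If the family (p,q) ↦ C(p,q) · g^{p+q} · μ^q, indexed by ℕ × ℕ, is summable, then g < 27/256 and g·μ < 1/4. -/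
lemma melonC_pos (p q : ℕ) : 0 < melonC p q := by
  unfold melonC
  positivity

-- ratio identity for q = 1 row
lemma melonC_succ_one (p : ℕ) :
    melonC (p + 1) 1 = melonC p 1 *
      (((4*p+3 : ℕ) : ℝ) * ((4*p+4 : ℕ) : ℝ) * ((4*p+5 : ℕ) : ℝ) * ((4*p+6 : ℕ) : ℝ)) /
      (((p+1 : ℕ) : ℝ) * ((3*p+3 : ℕ) : ℝ) * ((3*p+4 : ℕ) : ℝ) * ((3*p+5 : ℕ) : ℝ)) := by
  unfold melonC
  have e1 : 4 * (p+1) + 2 * 1 = (4*p+2) + 1 + 1 + 1 + 1 := by ring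
  have e2 : 3 * (p+1) + 1 + 1 = (3*p+2) + 1 + 1 + 1 := by ring
  have e3 : 4 * p + 2 * 1 = 4*p+2 := by ring
  have e4 : 3 * p + 1 + 1 = 3*p+2 := by ring
  rw [e1, e2, e3, e4]
  simp only [Nat.factorial_succ]
  push_cast
  have h1 : (Nat.factorial p : ℝ) ≠ 0 := by positivity
  have h2 : (Nat.factorial (3*p+2) : ℝ) ≠ 0 := by positivity
  field_simp
  ring

lemma melonC_two_succ (q : ℕ) :
    melonC 2 (q + 1) = melonC 2 q *
      (((2*q+9 : ℕ) : ℝ) * ((2*q+10 : ℕ) : ℝ)) /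
      (((q+1 : ℕ) : ℝ) * ((q+8 : ℕ) : ℝ)) := by
  unfold melonC
  have e1 : 4 * 2 + 2 * (q+1) = (2*q+8) + 1 + 1 := by ring
  have e2 : 3 * 2 + (q+1) + 1 = (q+7) + 1 := by ring
  have e3 : 4 * 2 + 2 * q = 2*q+8 := by ring
  have e4 : 3 * 2 + q + 1 = q+7 := by ring
  rw [e1, e2, e3, e4]
  simp only [Nat.factorial_succ]
  push_cast
  have h1 : (Nat.factorial q : ℝ) ≠ 0 := by positivity
  have h2 : (Nat.factorial (q+7) : ℝ) ≠ 0 := by positivity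
  field_simp
  ring

lemma melonC_row_lb : ∀ p : ℕ, (256/27 : ℝ)^p ≤ ((p:ℝ)+1) * melonC p 1 := by
  intro p
  induction p with
  | zero => simp [melonC]
  | succ p ih =>
    rw [melonC_succ_one]
    push_cast
    have hpos : (0:ℝ) < ((p:ℝ)+1) * ((3*(p:ℝ)+3) * ((3*(p:ℝ)+4) * (3*(p:ℝ)+5))) := by positivity
    have hm := (melonC_pos p 1).le
    have key : (256/27 : ℝ) * (((p:ℝ)+1) * melonC p 1)
        ≤ ((p:ℝ)+1+1) * (melonC p 1 *
          ((4*(p:ℝ)+3) * (4*(p:ℝ)+4) * (4*(p:ℝ)+5) * (4*(p:ℝ)+6)) /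
          (((p:ℝ)+1) * (3*(p:ℝ)+3) * (3*(p:ℝ)+4) * (3*(p:ℝ)+5))) := by
      have hp : (0:ℝ) ≤ (p:ℝ) := Nat.cast_nonneg p
      have poly : 256*((p:ℝ)+1)^2*((3*(p:ℝ)+3)*(3*(p:ℝ)+4)*(3*(p:ℝ)+5))
          ≤ 27*((4*(p:ℝ)+3)*(4*(p:ℝ)+4)*(4*(p:ℝ)+5)*(4*(p:ℝ)+6))*((p:ℝ)+2) := by
        nlinarith [sq_nonneg ((p:ℝ)), sq_nonneg ((p:ℝ)+1), pow_nonneg hp 3, pow_nonneg hp 4, pow_nonneg hp 5]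
      rw [show ((p:ℝ)+1+1) * (melonC p 1 *
          ((4*(p:ℝ)+3) * (4*(p:ℝ)+4) * (4*(p:ℝ)+5) * (4*(p:ℝ)+6)) /
          (((p:ℝ)+1) * (3*(p:ℝ)+3) * (3*(p:ℝ)+4) * (3*(p:ℝ)+5)))
        = ((p:ℝ)+1+1) * (melonC p 1 *
          ((4*(p:ℝ)+3) * (4*(p:ℝ)+4) * (4*(p:ℝ)+5) * (4*(p:ℝ)+6))) /
          (((p:ℝ)+1) * (3*(p:ℝ)+3) * (3*(p:ℝ)+4) * (3*(p:ℝ)+5)) from by ring,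
        le_div_iff₀ (by positivity)]
      nlinarith [mul_le_mul_of_nonneg_left poly hm]
    calc (256/27 : ℝ)^(p+1) = (256/27) * (256/27)^p := by ring
      _ ≤ (256/27) * (((p:ℝ)+1) * melonC p 1) := by
          apply mul_le_mul_of_nonneg_left ih (by norm_num)
      _ ≤ _ := key

lemma melonC_col_lb : ∀ q : ℕ, (4:ℝ) ≤ melonC 2 q * (1/4)^q := by
  intro q
  induction q with
  | zero => norm_num [melonC, Nat.factorial]
  | succ q ih =>
    rw [melonC_two_succ]
    push_cast
    have hq : (0:ℝ) ≤ (q:ℝ) := Nat.cast_nonneg q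
    rw [div_mul_eq_mul_div, le_div_iff₀ (by positivity)]
    have e : melonC 2 q * ((2*(q:ℝ)+9) * (2*(q:ℝ)+10)) * (1/4)^(q+1)
        = (melonC 2 q * (1/4)^q) * ((2*(q:ℝ)+9) * (2*(q:ℝ)+10) / 4) := by
      rw [pow_succ]; ring
    rw [e]
    nlinarith [mul_le_mul_of_nonneg_right ih
      (by positivity : (0:ℝ) ≤ (2*(q:ℝ)+9) * (2*(q:ℝ)+10) / 4)]

/-- If the double series `∑_{p,q} C(p,q) g^{p+q} μ^q` is summable for `g, μ > 0`,
then `g < 27/256` and `g·μ < 1/4`. -/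
theorem summable_melon_series_bounds (g μ : ℝ) (hg : 0 < g) (hμ : 0 < μ)
    (h : Summable (fun pq : ℕ × ℕ => melonC pq.1 pq.2 * g ^ (pq.1 + pq.2) * μ ^ pq.2)) :
    g < 27 / 256 ∧ g * μ < 1 / 4 := by
  constructor
  · by_contra hge
    push_neg at hge
    have hinj : Function.Injective (fun p : ℕ => ((p, 1) : ℕ × ℕ)) := by
      intro a b hab; simpa using hab
    have h1 : Summable (fun p : ℕ => melonC p 1 * g ^ (p + 1) * μ ^ 1) := by
      have := h.comp_injective hinj
      simpa [Function.comp_def] using this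
    have hsum : Summable (fun p : ℕ => g * μ / ((p:ℝ) + 1)) := by
      apply h1.of_nonneg_of_le (fun p => by positivity)
      intro p
      have lb := melonC_row_lb p
      have hgp : ((27:ℝ)/256)^p * (256/27)^p = 1 := by
        rw [← mul_pow]; norm_num
      have hgpow : ((27:ℝ)/256)^p ≤ g ^ p := pow_le_pow_left₀ (by norm_num : (0:ℝ) ≤ 27/256) hge p
      have hmc : (256/27 : ℝ)^p / ((p:ℝ)+1) ≤ melonC p 1 := by
        rw [div_le_iff₀ (by positivity)]
        linarith [melonC_row_lb p]
      calc g * μ / ((p:ℝ) + 1)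
          = (27/256:ℝ)^p * ((256/27:ℝ)^p / ((p:ℝ)+1)) * g * μ := by
            rw [show (27/256:ℝ)^p * ((256/27:ℝ)^p / ((p:ℝ)+1))
              = (27/256:ℝ)^p * (256/27:ℝ)^p / ((p:ℝ)+1) from by ring, hgp]; ring
        _ ≤ g ^ p * melonC p 1 * g * μ := by
            apply mul_le_mul_of_nonneg_right _ hμ.le
            apply mul_le_mul_of_nonneg_right _ hg.le
            exact mul_le_mul hgpow hmc (by positivity) (by positivity)
        _ = melonC p 1 * g ^ (p + 1) * μ ^ 1 := by rw [pow_succ]; ring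
    have hsum2 : Summable (fun p : ℕ => 1 / ((p:ℝ) + 1)) := by
      have := hsum.mul_left (g * μ)⁻¹
      have hne : g * μ ≠ 0 := by positivity
      convert this using 2 with p
      case e'_3 => rfl
      field_simp
    have : Summable (fun n : ℕ => 1 / (n:ℝ)) := by
      apply (summable_nat_add_iff 1).1
      convert hsum2 using 2 with p
      case e'_3 => rfl
      push_cast; ring
    exact Real.not_summable_one_div_natCast this
  · by_contra hge
    push_neg at hge
    have hinj : Function.Injective (fun q : ℕ => ((2, q) : ℕ × ℕ)) := by
      intro a b hab; simpa using hab
    have h2 : Summable (fun q : ℕ => melonC 2 q * g ^ (2 + q) * μ ^ q) := by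
      have := h.comp_injective hinj
      simpa [Function.comp_def] using this
    have hbd : ∀ q : ℕ, 4 * g ^ 2 ≤ melonC 2 q * g ^ (2 + q) * μ ^ q := by
      intro q
      have lb := melonC_col_lb q
      have hpow : ((1:ℝ)/4)^q ≤ (g*μ)^q := pow_le_pow_left₀ (by norm_num : (0:ℝ) ≤ 1/4) hge q
      calc 4 * g ^ 2 ≤ (melonC 2 q * (1/4)^q) * g ^ 2 :=
            mul_le_mul_of_nonneg_right lb (by positivity)
        _ ≤ (melonC 2 q * (g*μ)^q) * g ^ 2 := by
            apply mul_le_mul_of_nonneg_right _ (by positivity)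
            exact mul_le_mul_of_nonneg_left hpow (melonC_pos 2 q).le
        _ = melonC 2 q * g ^ (2 + q) * μ ^ q := by
            rw [mul_pow, pow_add]; ring
    have := ge_of_tendsto h2.tendsto_atTop_zero (Filter.Eventually.of_forall hbd)
    nlinarith [sq_nonneg g, pow_pos hg 2]
end

section
/- In the ring of formal power series over ℚ in two variables X and Y, there is exactly one power series G satisfying G = 1 + X·G²·(G² + Y), and its coefficients are given explicitly by: the coefficient of X^a·Y^b in G equals C(a − b, b) = (4a − 2b)! / ((a − b)! · b! · (3a − 2b + 1)!) when b ≤ a, and 0 when b > a. -/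
open MvPowerSeries

namespace Melonic

open Finset

/-- The closed-form coefficient of `G^(k+1)` at the monomial with `p` quartic and `q`
quadratic vertices. -/
def dd (k p q : ℕ) : ℚ :=
  ((k : ℚ) + 1) * (Nat.factorial (4*p + 2*q + k)) /
    ((Nat.factorial p) * (Nat.factorial q) * (Nat.factorial (3*p + q + k + 1)))

/-- Coefficients of `G^k` (including `G^0 = 1`). -/
def DD : ℕ → ℕ → ℕ → ℚ
  | 0, p, q => if p = 0 ∧ q = 0 then 1 else 0
  | (k+1), p, q => dd k p q

lemma dd_zero_zero (k : ℕ) : dd k 0 0 = 1 := by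
  unfold dd
  simp only [Nat.mul_zero, Nat.zero_add, Nat.add_zero, Nat.factorial_zero, Nat.factorial_succ]
  push_cast
  field_simp

/-- The fundamental recurrence, coefficientwise form of
`G^(k+1) = G^k + X·G^(k+4) + X·Y·G^(k+2)`. -/
lemma dd_rec (k p q : ℕ) : dd k p q =
    DD k p q + (if p = 0 then 0 else dd (k+3) (p-1) q)
      + (if q = 0 then 0 else dd (k+1) p (q-1)) := by
  rcases p with _ | p <;> rcases q with _ | q
  · cases k <;> simp [dd_zero_zero, DD]
  · -- p = 0, q = q+1
    simp only [if_pos rfl, Nat.succ_ne_zero, if_neg, add_zero, Nat.add_sub_cancel]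
    cases k with
    | zero =>
      simp only [DD, Nat.succ_ne_zero, and_false, if_false, zero_add]
      unfold dd
      have e1 : 4*0+2*(q+1)+0 = (2*q+1)+1 := by ring
      have e2 : 3*0+(q+1)+0+1 = (q+1)+1 := by ring
      have e3 : 4*0+2*q+1 = 2*q+1 := by ring
      have e4 : 3*0+q+1+1 = (q+1)+1 := by ring
      rw [e1, e2, e3, e4, Nat.factorial_succ (2*q+1), Nat.factorial_succ q]
      push_cast
      field_simp
      ring
    | succ K =>
      simp only [DD]
      unfold dd
      have e1 : 4*0+2*(q+1)+(K+1) = (2*q+K+2)+1 := by ring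
      have e2 : 3*0+(q+1)+(K+1)+1 = (q+K+2)+1 := by ring
      have e3 : 4*0+2*(q+1)+K = 2*q+K+2 := by ring
      have e4 : 3*0+(q+1)+K+1 = q+K+2 := by ring
      have e5 : 4*0+2*q+(K+2) = 2*q+K+2 := by ring
      have e6 : 3*0+q+(K+2)+1 = (q+K+2)+1 := by ring
      rw [e1, e2, e3, e4, e5, e6, Nat.factorial_succ (2*q+K+2), Nat.factorial_succ (q+K+2),
        Nat.factorial_succ q]
      push_cast
      field_simp
      ring
  · -- p = p+1, q = 0
    simp only [if_pos rfl, Nat.succ_ne_zero, if_neg, add_zero, Nat.add_sub_cancel]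
    cases k with
    | zero =>
      simp only [DD, Nat.succ_ne_zero, false_and, if_false, zero_add]
      unfold dd
      have e1 : 4*(p+1)+2*0+0 = (4*p+3)+1 := by ring
      have e2 : 3*(p+1)+0+0+1 = 3*p+4 := by ring
      have e3 : 4*p+2*0+3 = 4*p+3 := by ring
      have e4 : 3*p+0+3+1 = 3*p+4 := by ring
      rw [e1, e2, e3, e4, Nat.factorial_succ (4*p+3), Nat.factorial_succ p]
      push_cast
      field_simp
      ring
    | succ K =>
      simp only [DD]
      unfold dd
      have e1 : 4*(p+1)+2*0+(K+1) = (4*p+K+4)+1 := by ring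
      have e2 : 3*(p+1)+0+(K+1)+1 = (3*p+K+4)+1 := by ring
      have e3 : 4*(p+1)+2*0+K = 4*p+K+4 := by ring
      have e4 : 3*(p+1)+0+K+1 = 3*p+K+4 := by ring
      have e5 : 4*p+2*0+(K+4) = 4*p+K+4 := by ring
      have e6 : 3*p+0+(K+4)+1 = (3*p+K+4)+1 := by ring
      rw [e1, e2, e3, e4, e5, e6, Nat.factorial_succ (4*p+K+4), Nat.factorial_succ (3*p+K+4),
        Nat.factorial_succ p]
      push_cast
      field_simp
      ring
  · -- p = p+1, q = q+1
    simp only [Nat.succ_ne_zero, if_neg, Nat.add_sub_cancel]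
    cases k with
    | zero =>
      simp only [DD, Nat.succ_ne_zero, false_and, if_false, zero_add]
      unfold dd
      have e1 : 4*(p+1)+2*(q+1)+0 = (4*p+2*q+5)+1 := by ring
      have e2 : 3*(p+1)+(q+1)+0+1 = 3*p+q+5 := by ring
      have e3 : 4*p+2*(q+1)+3 = 4*p+2*q+5 := by ring
      have e4 : 3*p+(q+1)+3+1 = 3*p+q+5 := by ring
      have e5 : 4*(p+1)+2*q+1 = 4*p+2*q+5 := by ring
      have e6 : 3*(p+1)+q+1+1 = 3*p+q+5 := by ring
      rw [e1, e2, e3, e4, e5, e6, Nat.factorial_succ (4*p+2*q+5), Nat.factorial_succ p,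
        Nat.factorial_succ q]
      push_cast
      field_simp
      ring
    | succ K =>
      simp only [DD]
      unfold dd
      have e1 : 4*(p+1)+2*(q+1)+(K+1) = (4*p+2*q+K+6)+1 := by ring
      have e2 : 3*(p+1)+(q+1)+(K+1)+1 = (3*p+q+K+5)+1 := by ring
      have e3 : 4*(p+1)+2*(q+1)+K = 4*p+2*q+K+6 := by ring
      have e4 : 3*(p+1)+(q+1)+K+1 = 3*p+q+K+5 := by ring
      have e5 : 4*p+2*(q+1)+(K+4) = 4*p+2*q+K+6 := by ring
      have e6 : 3*p+(q+1)+(K+4)+1 = (3*p+q+K+5)+1 := by ring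
      have e7 : 4*(p+1)+2*q+(K+2) = 4*p+2*q+K+6 := by ring
      have e8 : 3*(p+1)+q+(K+2)+1 = (3*p+q+K+5)+1 := by ring
      rw [e1, e2, e3, e4, e5, e6, e7, e8, Nat.factorial_succ (4*p+2*q+K+6),
        Nat.factorial_succ (3*p+q+K+5), Nat.factorial_succ p, Nat.factorial_succ q]
      push_cast
      field_simp
      ring

lemma sum_snd_zero (p : ℕ) (f : ℕ → ℚ) :
    (∑ x ∈ antidiagonal p, if x.2 = 0 then f x.1 else 0) = f p := by
  rw [Finset.sum_eq_single (p, 0)]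
  · simp
  · rintro ⟨a, b⟩ hx hne
    rw [Finset.HasAntidiagonal.mem_antidiagonal] at hx
    have : b ≠ 0 := by rintro rfl; exact hne (by simp [← hx])
    simp [this]
  · intro h
    exact absurd (Finset.HasAntidiagonal.mem_antidiagonal.2 (by simp)) h

/-- Convolution identity: `G^k · G^j = G^(k+j)` at the level of the closed-form
coefficients. -/
lemma convDD (n : ℕ) : ∀ k j p q, p + q = n →
    (∑ x ∈ antidiagonal p, ∑ y ∈ antidiagonal q, DD k x.1 y.1 * DD j x.2 y.2)
      = DD (k+j) p q := by
  induction n using Nat.strong_induction_on with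
  | _ n IH =>
  intro k j p q hpq
  induction j with
  | zero =>
    have : ∀ x : ℕ × ℕ, (∑ y ∈ antidiagonal q, DD k x.1 y.1 * DD 0 x.2 y.2)
        = if x.2 = 0 then DD k x.1 q else 0 := by
      intro x
      rcases eq_or_ne x.2 0 with h | h
      · rw [if_pos h]
        rw [← sum_snd_zero q (fun b => DD k x.1 b)]
        refine Finset.sum_congr rfl fun y _ => ?_
        simp [DD, h, mul_ite]
      · rw [if_neg h]
        refine Finset.sum_eq_zero fun y _ => ?_
        simp [DD, h]
    rw [Finset.sum_congr rfl fun x _ => this x, sum_snd_zero p (fun a => DD k a q), add_zero]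
  | succ j IHj =>
    have expand : ∀ x y : ℕ × ℕ, DD k x.1 y.1 * DD (j+1) x.2 y.2
        = DD k x.1 y.1 * DD j x.2 y.2
          + DD k x.1 y.1 * (if x.2 = 0 then 0 else dd (j+3) (x.2-1) y.2)
          + DD k x.1 y.1 * (if y.2 = 0 then 0 else dd (j+1) x.2 (y.2-1)) := by
      intro x y
      show DD k x.1 y.1 * dd j x.2 y.2 = _
      rw [dd_rec j x.2 y.2]
      ring
    simp only [expand, Finset.sum_add_distrib]
    have hS0 : (∑ x ∈ antidiagonal p, ∑ y ∈ antidiagonal q, DD k x.1 y.1 * DD j x.2 y.2)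
        = DD (k+j) p q := IHj
    have hS1 : (∑ x ∈ antidiagonal p, ∑ y ∈ antidiagonal q,
          DD k x.1 y.1 * (if x.2 = 0 then 0 else dd (j+3) (x.2-1) y.2))
        = (if p = 0 then 0 else dd (k+j+3) (p-1) q) := by
      rcases p with _ | P
      · simp [Finset.Nat.antidiagonal_zero]
      · rw [if_neg (Nat.succ_ne_zero P), Nat.add_sub_cancel]
        rw [Finset.Nat.sum_antidiagonal_succ']
        simp only [if_pos rfl, mul_zero, Finset.sum_const_zero, zero_add, Nat.succ_ne_zero,
          if_neg, Nat.add_sub_cancel]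
        have : (∑ x ∈ antidiagonal P, ∑ y ∈ antidiagonal q, DD k x.1 y.1 * dd (j+3) x.2 y.2)
            = DD (k+(j+4)) P q := IH (P + q) (by omega) k (j+4) P q rfl
        simpa [DD, add_assoc] using this
    have hS2 : (∑ x ∈ antidiagonal p, ∑ y ∈ antidiagonal q,
          DD k x.1 y.1 * (if y.2 = 0 then 0 else dd (j+1) x.2 (y.2-1)))
        = (if q = 0 then 0 else dd (k+j+1) p (q-1)) := by
      rcases q with _ | Q
      · simp [Finset.Nat.antidiagonal_zero]
      · rw [if_neg (Nat.succ_ne_zero Q), Nat.add_sub_cancel]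
        rw [Finset.sum_congr rfl (fun x _ => Finset.Nat.sum_antidiagonal_succ'
          (f := fun y => DD k x.1 y.1 * (if y.2 = 0 then 0 else dd (j+1) x.2 (y.2-1))))]
        simp only [if_pos rfl, mul_zero, Nat.succ_ne_zero, if_neg, Nat.add_sub_cancel,
          zero_add]
        have : (∑ x ∈ antidiagonal p, ∑ y ∈ antidiagonal Q, DD k x.1 y.1 * dd (j+1) x.2 y.2)
            = DD (k+(j+2)) p Q := IH (p + Q) (by omega) k (j+2) p Q rfl
        simpa [DD, add_assoc] using this
    rw [hS0, hS1, hS2]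
    show _ = DD (k+j+1) p q
    show _ = dd (k+j) p q
    rw [dd_rec (k+j) p q]

/-- The monomial exponent `X^a·Y^b`. -/
noncomputable def sm (a b : ℕ) : Fin 2 →₀ ℕ := Finsupp.single 0 a + Finsupp.single 1 b

@[simp] lemma sm_apply_zero (a b : ℕ) : sm a b 0 = a := by simp [sm]
@[simp] lemma sm_apply_one (a b : ℕ) : sm a b 1 = b := by simp [sm]

lemma sm_eta (u : Fin 2 →₀ ℕ) : sm (u 0) (u 1) = u := by
  ext s; fin_cases s <;> simp [sm, Finsupp.single_apply]

lemma sm_eq_zero_iff (a b : ℕ) : sm a b = 0 ↔ a = 0 ∧ b = 0 := by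
  constructor
  · intro h
    constructor
    · have := congrArg (fun f : Fin 2 →₀ ℕ => f 0) h; simpa using this
    · have := congrArg (fun f : Fin 2 →₀ ℕ => f 1) h; simpa using this
  · rintro ⟨rfl, rfl⟩; simp [sm]

lemma coeff_mul_sm (φ ψ : MvPowerSeries (Fin 2) ℚ) (a b : ℕ) :
    coeff (sm a b) (φ * ψ) =
      ∑ x ∈ antidiagonal a, ∑ y ∈ antidiagonal b,
        coeff (sm x.1 y.1) φ * coeff (sm x.2 y.2) ψ := by
  rw [coeff_mul]
  rw [← Finset.sum_product']
  refine Finset.sum_nbij' (fun uv => ((uv.1 0, uv.2 0), (uv.1 1, uv.2 1)))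
    (fun z => (sm z.1.1 z.2.1, sm z.1.2 z.2.2)) ?_ ?_ ?_ ?_ ?_
  · rintro ⟨u, v⟩ h
    rw [Finset.HasAntidiagonal.mem_antidiagonal] at h
    simp only [Finset.mem_product, Finset.HasAntidiagonal.mem_antidiagonal]
    constructor
    · have := congrArg (fun f : Fin 2 →₀ ℕ => f 0) h; simpa using this
    · have := congrArg (fun f : Fin 2 →₀ ℕ => f 1) h; simpa using this
  · rintro ⟨⟨x1, x2⟩, ⟨y1, y2⟩⟩ h
    simp only [Finset.mem_product, Finset.HasAntidiagonal.mem_antidiagonal] at h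
    rw [Finset.HasAntidiagonal.mem_antidiagonal]
    ext s; fin_cases s <;> simp [sm, Finsupp.single_apply, h.1, h.2]
  · rintro ⟨u, v⟩ _
    simp [sm_eta]
  · rintro ⟨⟨x1, x2⟩, ⟨y1, y2⟩⟩ _
    simp
  · rintro ⟨u, v⟩ _
    simp [sm_eta]

lemma shift2 (c y2 : ℕ) (g : ℕ → ℕ → ℚ) :
    (∑ x ∈ antidiagonal (c + y2), if y2 ≤ x.2 then g x.1 (x.2 - y2) else 0)
      = ∑ x ∈ antidiagonal c, g x.1 x.2 := by
  induction y2 with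
  | zero => simp
  | succ y IH =>
    rw [show c + (y+1) = (c + y) + 1 from rfl, Finset.Nat.sum_antidiagonal_succ']
    have h0 : ¬ (y + 1 ≤ 0) := by omega
    rw [if_neg h0, zero_add]
    rw [← IH]
    refine Finset.sum_congr rfl fun x _ => ?_
    simp [Nat.succ_le_succ_iff, Nat.succ_sub_succ]

lemma shift1 (c y1 y2 : ℕ) (g : ℕ → ℕ → ℚ) :
    (∑ x ∈ antidiagonal (c + y1 + y2), if y1 ≤ x.1 ∧ y2 ≤ x.2 then g (x.1 - y1) (x.2 - y2) else 0)
      = ∑ x ∈ antidiagonal c, g x.1 x.2 := by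
  induction y1 with
  | zero =>
    simpa using shift2 c y2 (fun u v => g u v)
  | succ y IH =>
    rw [show c + (y+1) + y2 = (c + y + y2) + 1 by ring, Finset.Nat.sum_antidiagonal_succ]
    have h0 : ¬ (y + 1 ≤ 0 ∧ y2 ≤ c + y + y2 + 1) := by omega
    rw [if_neg h0, zero_add, ← IH]
    refine Finset.sum_congr rfl fun x _ => ?_
    simp [Nat.succ_le_succ_iff, Nat.succ_sub_succ]

/-- The power series `G^k`. -/
noncomputable def GD (k : ℕ) : MvPowerSeries (Fin 2) ℚ :=
  fun m => if m 1 ≤ m 0 then DD k (m 0 - m 1) (m 1) else 0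

lemma coeff_GD (k a b : ℕ) :
    coeff (sm a b) (GD k) = if b ≤ a then DD k (a - b) b else 0 := by
  rw [coeff_apply]
  show (if (sm a b) 1 ≤ (sm a b) 0 then DD k ((sm a b) 0 - (sm a b) 1) ((sm a b) 1) else 0) = _
  rw [sm_apply_zero, sm_apply_one]

lemma GD_mul (k j : ℕ) : GD k * GD j = GD (k + j) := by
  apply MvPowerSeries.ext
  intro m
  rw [← sm_eta m]
  set a := m 0; set b := m 1
  rw [coeff_mul_sm, coeff_GD]
  have hterm : ∀ x y : ℕ × ℕ,
      coeff (sm x.1 y.1) (GD k) * coeff (sm x.2 y.2) (GD j)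
        = if y.1 ≤ x.1 ∧ y.2 ≤ x.2 then DD k (x.1 - y.1) y.1 * DD j (x.2 - y.2) y.2 else 0 := by
    intro x y
    rw [coeff_GD, coeff_GD]
    by_cases h1 : y.1 ≤ x.1 <;> by_cases h2 : y.2 ≤ x.2 <;>
      simp [h1, h2]
  simp only [hterm]
  by_cases hba : b ≤ a
  · rw [if_pos hba]
    rw [Finset.sum_comm]
    have inner : ∀ y ∈ antidiagonal b,
        (∑ x ∈ antidiagonal a,
          if y.1 ≤ x.1 ∧ y.2 ≤ x.2 then DD k (x.1 - y.1) y.1 * DD j (x.2 - y.2) y.2 else 0)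
        = ∑ x ∈ antidiagonal (a - b), DD k x.1 y.1 * DD j x.2 y.2 := by
      intro y hy
      rw [Finset.HasAntidiagonal.mem_antidiagonal] at hy
      conv_lhs => rw [show a = (a - b) + y.1 + y.2 by omega]
      exact shift1 (a-b) y.1 y.2 (fun u v => DD k u y.1 * DD j v y.2)
    rw [Finset.sum_congr rfl inner, Finset.sum_comm]
    exact convDD ((a-b) + b) k j (a-b) b rfl
  · rw [if_neg hba]
    refine Finset.sum_eq_zero fun x hx => Finset.sum_eq_zero fun y hy => ?_
    rw [Finset.HasAntidiagonal.mem_antidiagonal] at hx hy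
    rw [if_neg]
    rintro ⟨h1, h2⟩
    omega

lemma coeff_identity (a b : ℕ) :
    (if b ≤ a then dd 0 (a-b) b else 0)
      = (if a = 0 ∧ b = 0 then 1 else 0)
        + (if 1 ≤ a then (if b ≤ a-1 then DD 4 (a-1-b) b else 0) else 0)
        + (if 1 ≤ a ∧ 1 ≤ b then (if b-1 ≤ a-1 then DD 2 (a-1-(b-1)) (b-1) else 0) else 0) := by
  by_cases hba : b ≤ a
  · rw [if_pos hba, dd_rec 0 (a-b) b]
    congr 1
    · congr 1
      · have h : (a - b = 0 ∧ b = 0) ↔ (a = 0 ∧ b = 0) := by omega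
        simp only [DD, h]
      · rcases Nat.lt_or_ge b a with h | h
        · rw [if_neg (by omega : ¬ (a - b = 0)), if_pos (by omega : 1 ≤ a),
            if_pos (by omega : b ≤ a - 1)]
          show dd 3 (a-b-1) b = dd 3 (a-1-b) b
          rw [show a-1-b = a-b-1 by omega]
        · have hab : a = b := le_antisymm (by omega) hba
          rw [if_pos (by omega : a - b = 0)]
          rcases Nat.eq_zero_or_pos a with h0 | h0
          · rw [if_neg (by omega : ¬ 1 ≤ a)]
          · rw [if_pos (by omega : 1 ≤ a), if_neg (by omega : ¬ b ≤ a - 1)]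
    · rcases Nat.eq_zero_or_pos b with h0 | h0
      · rw [if_pos h0, if_neg (by omega : ¬ (1 ≤ a ∧ 1 ≤ b))]
      · rw [if_neg (by omega : ¬ b = 0), if_pos (by omega : 1 ≤ a ∧ 1 ≤ b),
          if_pos (by omega : b - 1 ≤ a - 1)]
        show dd 1 (a-b) (b-1) = dd 1 (a-1-(b-1)) (b-1)
        rw [show a-1-(b-1) = a-b by omega]
  · rw [if_neg hba, if_neg (by omega : ¬ (a = 0 ∧ b = 0))]
    rcases Nat.eq_zero_or_pos a with h0 | h0
    · rw [if_neg (by omega : ¬ 1 ≤ a), if_neg (by omega : ¬ (1 ≤ a ∧ 1 ≤ b))]; norm_num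
    · rw [if_pos (by omega : 1 ≤ a), if_neg (by omega : ¬ b ≤ a - 1)]
      by_cases hb : 1 ≤ b
      · rw [if_pos ⟨h0, hb⟩, if_neg (by omega : ¬ b - 1 ≤ a - 1)]; norm_num
      · omega

lemma sm_le_sm_iff (a b c d : ℕ) : sm a b ≤ sm c d ↔ a ≤ c ∧ b ≤ d := by
  rw [Finsupp.le_def]
  constructor
  · intro h
    refine ⟨?_, ?_⟩
    · simpa [sm, Finsupp.single_apply] using h 0
    · simpa [sm, Finsupp.single_apply] using h 1
  · rintro ⟨h1, h2⟩ s
    fin_cases s <;> simp [sm, Finsupp.single_apply, h1, h2]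

lemma sm_sub_sm (a b c d : ℕ) : sm a b - sm c d = sm (a-c) (b-d) := by
  ext s; fin_cases s <;> simp [sm, Finsupp.tsub_apply, Finsupp.single_apply]

lemma X0_eq : (X 0 : MvPowerSeries (Fin 2) ℚ) = monomial (sm 1 0) 1 := by
  rw [X_def]; congr 1; simp [sm]

lemma X0X1_eq : (X 0 : MvPowerSeries (Fin 2) ℚ) * X 1 = monomial (sm 1 1) 1 := by
  rw [X_def, X_def, monomial_mul_monomial, one_mul]; rfl

/-- `G = GD 1` satisfies the leading-order Schwinger–Dyson equation. -/
lemma eqG : GD 1 = 1 + (X 0 : MvPowerSeries (Fin 2) ℚ) * (GD 1)^2 * ((GD 1)^2 + X 1) := by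
  have h2 : (GD 1)^2 = GD 2 := by rw [sq, GD_mul]
  have key : (X 0 : MvPowerSeries (Fin 2) ℚ) * (GD 1)^2 * ((GD 1)^2 + X 1)
      = monomial (sm 1 0) 1 * GD 4 + monomial (sm 1 1) 1 * GD 2 := by
    rw [h2]
    have : (X 0 : MvPowerSeries (Fin 2) ℚ) * GD 2 * (GD 2 + X 1)
        = X 0 * (GD 2 * GD 2) + (X 0 * X 1) * GD 2 := by ring
    rw [this, GD_mul, X0X1_eq, X0_eq]
  rw [key]
  apply MvPowerSeries.ext
  intro m
  rw [← sm_eta m]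
  set a := m 0; set b := m 1
  rw [map_add, map_add, coeff_GD, coeff_monomial_mul, coeff_monomial_mul]
  classical
  rw [coeff_one]
  have c1 : (sm 1 0 ≤ sm a b) ↔ (1 ≤ a) := by
    rw [sm_le_sm_iff]; simp
  have c2 : (sm 1 1 ≤ sm a b) ↔ (1 ≤ a ∧ 1 ≤ b) := sm_le_sm_iff 1 1 a b
  have c0 : (sm a b = 0) ↔ (a = 0 ∧ b = 0) := sm_eq_zero_iff a b
  simp only [c0, c1, c2, sm_sub_sm, one_mul, coeff_GD, Nat.sub_zero]
  show (if b ≤ a then DD 1 (a-b) b else 0) = _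
  show (if b ≤ a then dd 0 (a-b) b else 0) = _
  rw [coeff_identity a b]
  ring

lemma agree_mul {G1 G2 H1 H2 : MvPowerSeries (Fin 2) ℚ} {N : ℕ}
    (hG : ∀ u : Fin 2 →₀ ℕ, u 0 ≤ N → coeff u G1 = coeff u G2)
    (hH : ∀ u : Fin 2 →₀ ℕ, u 0 ≤ N → coeff u H1 = coeff u H2) :
    ∀ m : Fin 2 →₀ ℕ, m 0 ≤ N → coeff m (G1 * H1) = coeff m (G2 * H2) := by
  intro m hm
  classical
  rw [coeff_mul, coeff_mul]
  refine Finset.sum_congr rfl fun p hp => ?_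
  rw [Finset.HasAntidiagonal.mem_antidiagonal] at hp
  have h0 : p.1 0 + p.2 0 = m 0 := by
    have := congrArg (fun f : Fin 2 →₀ ℕ => f 0) hp
    simpa using this
  rw [hG p.1 (by omega), hH p.2 (by omega)]

lemma sol_unique {G1 G2 : MvPowerSeries (Fin 2) ℚ}
    (h1 : G1 = 1 + (X 0 : MvPowerSeries (Fin 2) ℚ) * G1 ^ 2 * (G1 ^ 2 + X 1))
    (h2 : G2 = 1 + (X 0 : MvPowerSeries (Fin 2) ℚ) * G2 ^ 2 * (G2 ^ 2 + X 1)) :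
    G1 = G2 := by
  have main : ∀ n : ℕ, ∀ m : Fin 2 →₀ ℕ, m 0 ≤ n → coeff m G1 = coeff m G2 := by
    intro n
    induction n using Nat.strong_induction_on with
    | _ n IH =>
    intro m hm
    conv_lhs => rw [h1]
    conv_rhs => rw [h2]
    rw [map_add, map_add]
    congr 1
    have e1 : (X 0 : MvPowerSeries (Fin 2) ℚ) * G1 ^ 2 * (G1 ^ 2 + X 1)
        = monomial (Finsupp.single 0 1) 1 * (G1 ^ 2 * (G1 ^ 2 + X 1)) := by
      rw [X_def]; ring
    have e2 : (X 0 : MvPowerSeries (Fin 2) ℚ) * G2 ^ 2 * (G2 ^ 2 + X 1)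
        = monomial (Finsupp.single 0 1) 1 * (G2 ^ 2 * (G2 ^ 2 + X 1)) := by
      rw [X_def]; ring
    rw [e1, e2, coeff_monomial_mul, coeff_monomial_mul]
    by_cases hle : Finsupp.single (0 : Fin 2) 1 ≤ m
    · rw [if_pos hle, if_pos hle]
      have hm1 : 1 ≤ m 0 := by
        have := Finsupp.le_def.1 hle 0
        simpa using this
      have hn : 1 ≤ n := le_trans hm1 hm
      have hsub : ((m - Finsupp.single (0 : Fin 2) 1 : Fin 2 →₀ ℕ)) 0 = m 0 - 1 := by
        rw [Finsupp.tsub_apply]; simp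
      have hIH : ∀ u : Fin 2 →₀ ℕ, u 0 ≤ n - 1 → coeff u G1 = coeff u G2 :=
        IH (n-1) (by omega)
      have hsq : ∀ u : Fin 2 →₀ ℕ, u 0 ≤ n - 1 → coeff u (G1^2) = coeff u (G2^2) := by
        intro u hu
        rw [sq, sq]
        exact agree_mul hIH hIH u hu
      have hsum : ∀ u : Fin 2 →₀ ℕ, u 0 ≤ n - 1 →
          coeff u (G1^2 + X 1) = coeff u (G2^2 + X 1) := by
        intro u hu
        rw [map_add, map_add, hsq u hu]
      congr 1
      exact agree_mul hsq hsum _ (by omega)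
    · rw [if_neg hle, if_neg hle]
  exact MvPowerSeries.ext fun m => main (m 0) m le_rfl

end Melonic

/-- In `ℚ[[X, Y]]` there is exactly one power series `G` satisfying the
leading-order Schwinger–Dyson equation `G = 1 + X·G²·(G² + Y)`, and its
coefficient of `X^a·Y^b` equals `(4a − 2b)! / ((a − b)!·b!·(3a − 2b + 1)!)` when
`b ≤ a`, and `0` when `b > a`. -/
theorem melonic_generating_function_unique :
    (∃! G : MvPowerSeries (Fin 2) ℚ,
        G = 1 + (X 0 : MvPowerSeries (Fin 2) ℚ) * G ^ 2 * (G ^ 2 + X 1)) ∧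
      ∀ G : MvPowerSeries (Fin 2) ℚ,
        G = 1 + (X 0 : MvPowerSeries (Fin 2) ℚ) * G ^ 2 * (G ^ 2 + X 1) →
          ∀ a b : ℕ,
            MvPowerSeries.coeff (Finsupp.single 0 a + Finsupp.single 1 b) G =
              if b ≤ a then
                (Nat.factorial (4 * a - 2 * b) : ℚ) /
                  ((Nat.factorial (a - b) : ℚ) * (Nat.factorial b : ℚ) *
                    (Nat.factorial (3 * a - 2 * b + 1) : ℚ))
              else 0 := by
  constructor
  · exact ⟨Melonic.GD 1, Melonic.eqG, fun y hy => Melonic.sol_unique hy Melonic.eqG⟩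
  · intro G hG a b
    have hGG : G = Melonic.GD 1 := Melonic.sol_unique hG Melonic.eqG
    rw [hGG]
    have hsm : Finsupp.single (0 : Fin 2) a + Finsupp.single 1 b = Melonic.sm a b := rfl
    rw [hsm, Melonic.coeff_GD]
    by_cases h : b ≤ a
    · rw [if_pos h, if_pos h]
      show Melonic.dd 0 (a-b) b = _
      unfold Melonic.dd
      rw [show 4*(a-b) + 2*b + 0 = 4*a - 2*b by omega,
        show 3*(a-b) + b + 0 + 1 = 3*a - 2*b + 1 by omega]
      norm_num
    · rw [if_neg h, if_neg h]
end

section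
/- For every real μ ≥ 0, the cubic polynomial −3x³ + 4x² − μx + 2μ has exactly one real root x with x > 1. Moreover, if μ > 0, then every real root of this polynomial satisfies x > 4/3, so this root is the unique real root of the polynomial. -/
private lemma cubic_root_eq (μ a b : ℝ) (hμ : 0 ≤ μ)
    (ha1 : 1 < a) (hb1 : 1 < b)
    (ha : -3 * a ^ 3 + 4 * a ^ 2 - μ * a + 2 * μ = 0)
    (hb : -3 * b ^ 3 + 4 * b ^ 2 - μ * b + 2 * μ = 0) : a = b := by
  have h : (a - b) * (-3 * (a ^ 2 + a * b + b ^ 2) + 4 * (a + b) - μ) = 0 := by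
    linear_combination ha - hb
  have hQ : -3 * (a ^ 2 + a * b + b ^ 2) + 4 * (a + b) - μ < 0 := by
    nlinarith [mul_pos (sub_pos.mpr ha1) (sub_pos.mpr hb1), sq_nonneg (a - 1),
      sq_nonneg (b - 1)]
  have := mul_eq_zero.mp h
  rcases this with h1 | h1
  · linarith
  · exact absurd h1 (ne_of_lt hQ)

/-- For every `μ ≥ 0`, the cubic `−3x³ + 4x² − μx + 2μ` has exactly one real
root `x > 1`.  Moreover, if `μ > 0` then every real root satisfies `x > 4/3`,
so this root is the unique real root of the cubic. -/
theorem critical_cubic_unique_root (μ : ℝ) (hμ : 0 ≤ μ) :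
    (∃! x : ℝ, 1 < x ∧ -3 * x ^ 3 + 4 * x ^ 2 - μ * x + 2 * μ = 0) ∧
      (0 < μ →
        (∀ x : ℝ, -3 * x ^ 3 + 4 * x ^ 2 - μ * x + 2 * μ = 0 → 4 / 3 < x) ∧
          ∃! x : ℝ, -3 * x ^ 3 + 4 * x ^ 2 - μ * x + 2 * μ = 0) := by
  set f : ℝ → ℝ := fun x => -3 * x ^ 3 + 4 * x ^ 2 - μ * x + 2 * μ with hf
  have hcont : ContinuousOn f (Set.Icc 1 (2 + μ)) := by
    apply Continuous.continuousOn; fun_prop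
  have hle : (1 : ℝ) ≤ 2 + μ := by linarith
  have hf1 : 0 < f 1 := by simp only [hf]; nlinarith
  have hf2 : f (2 + μ) < 0 := by simp only [hf]; nlinarith
  have h0 : (0 : ℝ) ∈ Set.Icc (f (2 + μ)) (f 1) := ⟨le_of_lt hf2, le_of_lt hf1⟩
  obtain ⟨x, hx, hfx⟩ := intermediate_value_Icc' hle hcont h0
  have hx1 : 1 < x := by
    rcases lt_or_eq_of_le hx.1 with h | h
    · exact h
    · exfalso; rw [← h] at hfx; linarith
  have hmain : ∃! x : ℝ, 1 < x ∧ -3 * x ^ 3 + 4 * x ^ 2 - μ * x + 2 * μ = 0 := by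
    refine ⟨x, ⟨hx1, hfx⟩, ?_⟩
    rintro y ⟨hy1, hy⟩
    exact cubic_root_eq μ y x hμ hy1 hx1 hy hfx
  refine ⟨hmain, fun hμpos => ?_⟩
  have hroot : ∀ z : ℝ, -3 * z ^ 3 + 4 * z ^ 2 - μ * z + 2 * μ = 0 → 4 / 3 < z := by
    intro z hz
    by_contra hle'
    push_neg at hle'
    nlinarith [mul_nonneg (sq_nonneg z) (show (0:ℝ) ≤ 4 - 3 * z by linarith),
      mul_pos hμpos (show (0:ℝ) < 2 - z by linarith)]
  refine ⟨hroot, x, hfx, fun y hy => ?_⟩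
  have hy1 : 1 < y := by linarith [hroot y hy]
  exact cubic_root_eq μ y x hμ hy1 hx1 hy hfx
end

section
/- Let μ ≥ 0 be real, let G_c(μ) be the unique real root x > 1 of −3x³ + 4x² − μx + 2μ = 0, and set g_c(μ) = (G_c(μ) − 1)/(G_c(μ)²·(G_c(μ)² + μ)). Then for every real g ≥ 0, the series n ↦ α_n(μ)·g^n is summable if and only if g ≤ g_c(μ). -/
/-- `α_n(μ) = ∑_{q=0}^{n} μ^q/(3n − 2q + 1) · C(n,q) · C(4n − 2q, n)`, the
coefficient of `g^n` in the leading-order two-point function `G_LO(g, μ)`. -/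
noncomputable def alphaCoeff (μ : ℝ) (n : ℕ) : ℝ :=
  ∑ q ∈ Finset.range (n + 1),
    μ ^ q / (3 * (n : ℝ) - 2 * (q : ℝ) + 1) * (Nat.choose n q : ℝ) *
      (Nat.choose (4 * n - 2 * q) n : ℝ)

open PowerSeries Finset

noncomputable def cc (μ : ℝ) : ℕ → ℝ
  | 0 => 1
  | n + 1 =>
    (∑ p ∈ (antidiagonal n).attach,
        (∑ r ∈ (antidiagonal p.1.1).attach, cc μ r.1.1 * cc μ r.1.2) *
        (∑ r ∈ (antidiagonal p.1.2).attach, cc μ r.1.1 * cc μ r.1.2))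
    + μ * ∑ p ∈ (antidiagonal n).attach, cc μ p.1.1 * cc μ p.1.2
  decreasing_by
  all_goals
    have hp := Finset.HasAntidiagonal.mem_antidiagonal.mp p.2
    first
    | (have hr := Finset.HasAntidiagonal.mem_antidiagonal.mp r.2; omega)
    | omega

lemma cc_succ (μ : ℝ) (n : ℕ) : cc μ (n+1) =
    (∑ p ∈ antidiagonal n,
        (∑ r ∈ antidiagonal p.1, cc μ r.1 * cc μ r.2) *
        (∑ r ∈ antidiagonal p.2, cc μ r.1 * cc μ r.2))
    + μ * ∑ p ∈ antidiagonal n, cc μ p.1 * cc μ p.2 := by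
  rw [cc]
  congr 1
  · rw [← Finset.sum_attach (antidiagonal n)]
    refine Finset.sum_congr rfl fun p _ => ?_
    congr 1
    · rw [← Finset.sum_attach (antidiagonal p.1.1)]
    · rw [← Finset.sum_attach (antidiagonal p.1.2)]
  · congr 1
    rw [← Finset.sum_attach (antidiagonal n)]

noncomputable def Fs (μ : ℝ) : ℝ⟦X⟧ := PowerSeries.mk (cc μ)

lemma coeff_Fs_sq (μ : ℝ) (n : ℕ) :
    (coeff n) (Fs μ ^ 2) = ∑ p ∈ antidiagonal n, cc μ p.1 * cc μ p.2 := by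
  rw [sq, coeff_mul]; simp [Fs, coeff_mk]

lemma hFs (μ : ℝ) : Fs μ = 1 + X * (Fs μ ^ 2 * Fs μ ^ 2 + C μ * Fs μ ^ 2) := by
  ext n
  cases n with
  | zero => simp [Fs, coeff_mk, cc]
  | succ n =>
    rw [map_add, coeff_succ_X_mul, map_add, coeff_mul, coeff_C_mul, coeff_Fs_sq]
    simp only [coeff_one, Nat.succ_ne_zero, if_false, zero_add, coeff_Fs_sq]
    rw [Fs, coeff_mk, cc_succ]

section LI
variable (μ : ℝ)

noncomputable def Vs : ℝ⟦X⟧ := Fs μ ^ 2 * Fs μ ^ 2 + C μ * Fs μ ^ 2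
noncomputable def Ws : ℝ⟦X⟧ := X * Vs μ
noncomputable def ds : ℝ⟦X⟧ := (Vs μ)⁻¹

lemma hW : Fs μ = 1 + Ws μ := by rw [Ws, Vs]; exact hFs μ

lemma constCoeff_Vs : constantCoeff (Vs μ) = 1 + μ := by
  have h1 : constantCoeff (Fs μ) = 1 := by simp [Fs, constantCoeff_mk, cc]
  simp [Vs, map_add, map_mul, map_pow, h1]

lemma hVd (hμ : (1:ℝ) + μ ≠ 0) : Vs μ * ds μ = 1 := by
  apply PowerSeries.mul_inv_cancel
  rw [constCoeff_Vs]; exact hμ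

lemma hdV (hμ : (1:ℝ) + μ ≠ 0) : ds μ * Vs μ = 1 := by rw [mul_comm]; exact hVd μ hμ

lemma hdW : d⁄dX ℝ (Ws μ) = Vs μ + X * d⁄dX ℝ (Vs μ) := by
  rw [Ws, Derivation.leibniz, derivative_X]
  simp [smul_eq_mul]; ring

lemma hDds (hμ : (1:ℝ) + μ ≠ 0) :
    d⁄dX ℝ (ds μ) = -(ds μ ^ 2 * d⁄dX ℝ (Vs μ)) := by
  have h0 := congrArg (d⁄dX ℝ) (hVd μ hμ)
  rw [Derivation.leibniz, Derivation.map_one_eq_zero] at h0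
  simp only [smul_eq_mul] at h0
  have h1 : ds μ * (Vs μ * d⁄dX ℝ (ds μ)) = ds μ * (-(ds μ * d⁄dX ℝ (Vs μ))) := by
    linear_combination (ds μ) * h0
  calc d⁄dX ℝ (ds μ) = (ds μ * Vs μ) * d⁄dX ℝ (ds μ) := by rw [hdV μ hμ, one_mul]
    _ = ds μ * (Vs μ * d⁄dX ℝ (ds μ)) := by ring
    _ = ds μ * (-(ds μ * d⁄dX ℝ (Vs μ))) := h1
    _ = -(ds μ ^ 2 * d⁄dX ℝ (Vs μ)) := by ring

lemma coeff_dj (hμ : (1:ℝ) + μ ≠ 0) (j : ℕ) :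
    coeff j (ds μ ^ (j+1) * d⁄dX ℝ (Ws μ)) = if j = 0 then 1 else 0 := by
  have hsplit : ds μ ^ (j+1) * d⁄dX ℝ (Ws μ)
      = ds μ ^ j + X * (ds μ ^ (j+1) * d⁄dX ℝ (Vs μ)) := by
    rw [hdW]
    calc ds μ ^ (j+1) * (Vs μ + X * d⁄dX ℝ (Vs μ))
        = ds μ ^ j * (ds μ * Vs μ) + X * (ds μ ^ (j+1) * d⁄dX ℝ (Vs μ)) := by ring
      _ = ds μ ^ j + X * (ds μ ^ (j+1) * d⁄dX ℝ (Vs μ)) := by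
          rw [hdV μ hμ, mul_one]
  rw [hsplit]
  cases j with
  | zero => simp
  | succ i =>
    rw [map_add, coeff_succ_X_mul, if_neg (Nat.succ_ne_zero i)]
    have hcast : ((i+1:ℕ) : ℝ⟦X⟧) = C ((i:ℝ)+1) := by
      rw [← map_natCast C (i+1)]; push_cast; ring
    have hder : d⁄dX ℝ (ds μ ^ (i+1))
        = -(C ((i:ℝ)+1) * (ds μ ^ (i+2) * d⁄dX ℝ (Vs μ))) := by
      rw [Derivation.leibniz_pow, hDds μ hμ]
      simp only [Nat.add_sub_cancel, smul_eq_mul, nsmul_eq_mul]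
      rw [hcast]
      ring
    have hc := coeff_derivative (ds μ ^ (i+1)) i
    rw [hder, map_neg, coeff_C_mul] at hc
    have hne : ((i:ℝ)+1) ≠ 0 := by positivity
    have h2 : coeff i (ds μ ^ (i + 1 + 1) * d⁄dX ℝ (Vs μ))
        = -coeff (i+1) (ds μ ^ (i+1)) := by
      have : (i:ℝ)+1 ≠ 0 := hne
      nlinarith [hc]
    rw [h2]
    ring
end LI

lemma coeff_Wk (μ : ℝ) (hμ : (1:ℝ) + μ ≠ 0) (N k : ℕ) :
    coeff N (Ws μ ^ k * ds μ ^ (N+1) * d⁄dX ℝ (Ws μ)) = if k = N then 1 else 0 := by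
  have hWpow : Ws μ ^ k = X ^ k * Vs μ ^ k := by rw [Ws, mul_pow]
  by_cases hk : k ≤ N
  · -- V^k * d^(N+1) = d^(N+1-k)
    obtain ⟨j, hj⟩ : ∃ j, N = k + j := ⟨N - k, by omega⟩
    have hVkd : Vs μ ^ k * ds μ ^ (N+1) = ds μ ^ (j+1) := by
      have h1 : ds μ ^ (N+1) = ds μ ^ k * ds μ ^ (j+1) := by
        rw [← pow_add]; congr 1; omega
      rw [h1, ← mul_assoc, ← mul_pow, hVd μ hμ, one_pow, one_mul]
    have heq : Ws μ ^ k * ds μ ^ (N+1) * d⁄dX ℝ (Ws μ)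
        = X ^ k * (ds μ ^ (j+1) * d⁄dX ℝ (Ws μ)) := by
      rw [hWpow]
      calc X ^ k * Vs μ ^ k * ds μ ^ (N+1) * d⁄dX ℝ (Ws μ)
          = X ^ k * ((Vs μ ^ k * ds μ ^ (N+1)) * d⁄dX ℝ (Ws μ)) := by ring
        _ = X ^ k * (ds μ ^ (j+1) * d⁄dX ℝ (Ws μ)) := by rw [hVkd]
    rw [heq, hj, add_comm k j, coeff_X_pow_mul, coeff_dj μ hμ j]
    by_cases hj0 : j = 0
    · rw [if_pos hj0, if_pos (by omega)]
    · rw [if_neg hj0, if_neg (by omega)]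
  · -- k > N
    obtain ⟨i, hi⟩ : ∃ i, k = i + (N + 1) := ⟨k - (N+1), by omega⟩
    have heq : Ws μ ^ k * ds μ ^ (N+1) * d⁄dX ℝ (Ws μ)
        = X ^ k * (Vs μ ^ i * d⁄dX ℝ (Ws μ)) := by
      rw [hWpow, hi, pow_add (Vs μ)]
      calc X ^ (i + (N+1)) * (Vs μ ^ i * Vs μ ^ (N+1)) * ds μ ^ (N+1) * d⁄dX ℝ (Ws μ)
          = X ^ (i + (N+1)) * ((Vs μ * ds μ) ^ (N+1) * (Vs μ ^ i * d⁄dX ℝ (Ws μ))) := by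
            rw [mul_pow]; ring
        _ = X ^ (i + (N+1)) * (Vs μ ^ i * d⁄dX ℝ (Ws μ)) := by rw [hVd μ hμ, one_pow, one_mul]
    rw [heq, coeff_X_pow_mul', if_neg (by omega), if_neg (by omega)]

lemma coeff_FmE (μ : ℝ) (hμ : (1:ℝ) + μ ≠ 0) (N m : ℕ) (hm : N ≤ m) :
    coeff N (Fs μ ^ m * (ds μ ^ (N+1) * d⁄dX ℝ (Ws μ))) = (m.choose N : ℝ) := by
  have hpow : Fs μ ^ m = ∑ k ∈ range (m+1), Ws μ ^ k * (m.choose k : ℝ⟦X⟧) := by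
    rw [hW, add_comm (1 : ℝ⟦X⟧) (Ws μ), add_pow]
    exact Finset.sum_congr rfl fun k _ => by rw [one_pow, mul_one]
  rw [hpow, Finset.sum_mul, map_sum]
  have hterm : ∀ k ∈ range (m+1),
      coeff N (Ws μ ^ k * (m.choose k : ℝ⟦X⟧) * (ds μ ^ (N+1) * d⁄dX ℝ (Ws μ)))
      = (m.choose k : ℝ) * (if k = N then 1 else 0) := by
    intro k _
    have h1 : Ws μ ^ k * (m.choose k : ℝ⟦X⟧) * (ds μ ^ (N+1) * d⁄dX ℝ (Ws μ))
        = C (m.choose k : ℝ) * (Ws μ ^ k * ds μ ^ (N+1) * d⁄dX ℝ (Ws μ)) := by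
      rw [← map_natCast C (m.choose k)]; push_cast; ring
    rw [h1, coeff_C_mul, coeff_Wk μ hμ N k]
  rw [Finset.sum_congr rfl hterm, Finset.sum_eq_single N]
  · rw [if_pos rfl, mul_one]
  · intro k _ hk; rw [if_neg hk, mul_zero]
  · intro h; exact absurd (Finset.mem_range.mpr (by omega)) h

lemma hVpow (μ : ℝ) (n : ℕ) : Vs μ ^ n
    = ∑ q ∈ range (n+1), C (μ^q) * Fs μ ^ (4*n-2*q) * (n.choose q : ℝ⟦X⟧) := by
  rw [Vs, add_comm (Fs μ ^ 2 * Fs μ ^ 2) (C μ * Fs μ ^ 2), add_pow]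
  refine Finset.sum_congr rfl fun q hq => ?_
  have hq' : q ≤ n := by have := Finset.mem_range.mp hq; omega
  have h4 : 4*n-2*q = 2*q + 4*(n-q) := by omega
  rw [h4, mul_pow, ← map_pow, pow_add]
  have e1 : (Fs μ ^ 2 * Fs μ ^ 2) ^ (n - q) = Fs μ ^ (4*(n-q)) := by
    rw [← pow_add, ← pow_mul]
  have e2 : (Fs μ ^ 2) ^ q = Fs μ ^ (2*q) := by rw [← pow_mul]
  rw [e1, e2]
  ring

lemma n_mul_cc (μ : ℝ) (hμ : (1:ℝ) + μ ≠ 0) (n : ℕ) (hn : 1 ≤ n) :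
    (n:ℝ) * cc μ n
      = ∑ q ∈ range (n+1), μ^q * (n.choose q : ℝ) * (((4*n-2*q).choose (n-1)) : ℝ) := by
  obtain ⟨N, rfl⟩ : ∃ N, n = N + 1 := ⟨n - 1, by omega⟩
  have h1 : coeff N (d⁄dX ℝ (Ws μ)) = cc μ (N+1) * ((N:ℝ)+1) := by
    rw [coeff_derivative]
    congr 1
    have := congrArg (coeff (N+1)) (hW μ)
    rw [map_add, coeff_one, if_neg (Nat.succ_ne_zero N), zero_add] at this
    rw [← this, Fs, coeff_mk]
  have h2 : d⁄dX ℝ (Ws μ) = Vs μ ^ (N+1) * (ds μ ^ (N+1) * d⁄dX ℝ (Ws μ)) := by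
    calc d⁄dX ℝ (Ws μ) = (Vs μ * ds μ) ^ (N+1) * d⁄dX ℝ (Ws μ) := by
          rw [hVd μ hμ, one_pow, one_mul]
      _ = Vs μ ^ (N+1) * (ds μ ^ (N+1) * d⁄dX ℝ (Ws μ)) := by rw [mul_pow]; ring
  have h3 : coeff N (d⁄dX ℝ (Ws μ))
      = ∑ q ∈ range (N+2), μ^q * ((N+1).choose q : ℝ) * (((4*(N+1)-2*q).choose N) : ℝ) := by
    rw [h2, hVpow, Finset.sum_mul, map_sum]
    refine Finset.sum_congr rfl fun q hq => ?_
    have hq' : q ≤ N + 1 := by have := Finset.mem_range.mp hq; omega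
    have hNm : N ≤ 4*(N+1)-2*q := by omega
    have hass : C (μ^q) * Fs μ ^ (4*(N+1)-2*q) * ((N+1).choose q : ℝ⟦X⟧)
          * (ds μ ^ (N+1) * d⁄dX ℝ (Ws μ))
        = C (μ^q) * (((N+1).choose q : ℝ⟦X⟧) *
            (Fs μ ^ (4*(N+1)-2*q) * (ds μ ^ (N+1) * d⁄dX ℝ (Ws μ)))) := by ring
    rw [hass, coeff_C_mul, ← map_natCast C ((N+1).choose q), coeff_C_mul,
      coeff_FmE μ hμ N _ hNm]
    ring
  have := h3 ▸ h1
  have hfin : (((N:ℕ)+1 : ℕ):ℝ) * cc μ (N+1) = cc μ (N+1) * ((N:ℝ)+1) := by push_cast; ring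
  rw [hfin, ← this]
  norm_num

lemma alpha_eq_cc (μ : ℝ) (hμ : 0 ≤ μ) (n : ℕ) : alphaCoeff μ n = cc μ n := by
  cases n with
  | zero => simp [alphaCoeff, cc]
  | succ N =>
    set n := N + 1 with hn
    have hμ' : (1:ℝ) + μ ≠ 0 := by positivity
    have hne : (n:ℝ) ≠ 0 := by positivity
    have key := n_mul_cc μ hμ' n (by omega)
    have hL : (n:ℝ) * alphaCoeff μ n
        = ∑ q ∈ range (n+1), μ^q * (n.choose q : ℝ) * (((4*n-2*q).choose (n-1)) : ℝ) := by
      rw [alphaCoeff, Finset.mul_sum]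
      refine Finset.sum_congr rfl fun q hq => ?_
      have hq' : q ≤ n := by have := Finset.mem_range.mp hq; omega
      have hchoose := Nat.choose_succ_right_eq (4*n-2*q) (n-1)
      have hn1 : n - 1 + 1 = n := by omega
      rw [hn1] at hchoose
      -- hchoose : (4*n-2*q).choose n * n = (4*n-2*q).choose (n-1) * (4*n-2*q - (n-1))
      have hsub : 4*n-2*q - (n-1) = 3*n - 2*q + 1 := by omega
      rw [hsub] at hchoose
      have hcast : (((3*n - 2*q + 1 : ℕ)) : ℝ) = 3*(n:ℝ) - 2*(q:ℝ) + 1 := by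
        have h1 : 2*q ≤ 3*n := by omega
        push_cast [Nat.cast_sub h1]
        ring
      have hchoose' : ((4*n-2*q).choose n : ℝ) * n
          = ((4*n-2*q).choose (n-1) : ℝ) * (3*(n:ℝ) - 2*(q:ℝ) + 1) := by
        rw [← hcast]
        exact_mod_cast congrArg (Nat.cast : ℕ → ℝ) hchoose
      have hpos : (0:ℝ) < 3*(n:ℝ) - 2*(q:ℝ) + 1 := by
        have : (q:ℝ) ≤ n := by exact_mod_cast hq'
        have : (1:ℝ) ≤ n := by exact_mod_cast (by omega : 1 ≤ n)
        nlinarith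
      have hN : n - 1 = N := by omega
      rw [hN] at hchoose'
      rw [hN, div_mul_eq_mul_div, div_mul_eq_mul_div, mul_div_assoc', eq_comm, eq_div_iff hpos.ne']
      linear_combination (-(μ^q * (n.choose q : ℝ))) * hchoose'
    have : (n:ℝ) * alphaCoeff μ n = (n:ℝ) * cc μ n := by rw [hL, key]
    exact mul_left_cancel₀ hne this

lemma alpha_rec (μ : ℝ) (hμ : 0 ≤ μ) (n : ℕ) : alphaCoeff μ (n+1) =
    (∑ p ∈ antidiagonal n,
        (∑ r ∈ antidiagonal p.1, alphaCoeff μ r.1 * alphaCoeff μ r.2) *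
        (∑ r ∈ antidiagonal p.2, alphaCoeff μ r.1 * alphaCoeff μ r.2))
    + μ * ∑ p ∈ antidiagonal n, alphaCoeff μ p.1 * alphaCoeff μ p.2 := by
  simp only [alpha_eq_cc μ hμ]
  exact cc_succ μ n

lemma alpha_nonneg (μ : ℝ) (hμ : 0 ≤ μ) (n : ℕ) : 0 ≤ alphaCoeff μ n := by
  apply Finset.sum_nonneg
  intro q hq
  have hq' : q ≤ n := by have := Finset.mem_range.mp hq; omega
  have hpos : (0:ℝ) < 3*(n:ℝ) - 2*(q:ℝ) + 1 := by
    have h1 : (q:ℝ) ≤ n := by exact_mod_cast hq'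
    have h2 : (0:ℝ) ≤ n := by positivity
    nlinarith
  have := pow_nonneg hμ q
  positivity

lemma alpha_zero (μ : ℝ) : alphaCoeff μ 0 = 1 := by simp [alphaCoeff]


lemma sum_antidiag_le_sq (x : ℕ → ℝ) (hx : ∀ i, 0 ≤ x i) (N : ℕ) :
    ∑ n ∈ range N, ∑ p ∈ antidiagonal n, x p.1 * x p.2 ≤ (∑ i ∈ range N, x i)^2 := by
  have h1 : ∑ n ∈ range N, ∑ p ∈ antidiagonal n, x p.1 * x p.2
      = ∑ p ∈ (range N ×ˢ range N).filter (fun p => p.1 + p.2 < N), x p.1 * x p.2 := by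
    rw [Finset.sum_sigma']
    apply Finset.sum_bij (fun s _ => s.2)
    · rintro ⟨n, p⟩ hs
      simp only [Finset.mem_sigma, Finset.mem_range, Finset.HasAntidiagonal.mem_antidiagonal] at hs
      simp only [Finset.mem_filter, Finset.mem_product, Finset.mem_range]
      omega
    · rintro ⟨n1, p1⟩ hs1 ⟨n2, p2⟩ hs2 h
      simp only [Finset.mem_sigma, Finset.mem_range, Finset.HasAntidiagonal.mem_antidiagonal] at hs1 hs2
      simp only at h
      subst h
      simp only [Sigma.mk.inj_iff, heq_eq_eq, and_true]
      omega
    · intro p hp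
      simp only [Finset.mem_filter, Finset.mem_product, Finset.mem_range] at hp
      refine ⟨⟨p.1 + p.2, p⟩, ?_, rfl⟩
      simp only [Finset.mem_sigma, Finset.mem_range, Finset.HasAntidiagonal.mem_antidiagonal]
      exact ⟨hp.2, trivial⟩
    · intros; rfl
  rw [h1, sq, Finset.sum_mul_sum]
  rw [← Finset.sum_product']
  apply Finset.sum_le_sum_of_subset_of_nonneg (Finset.filter_subset _ _)
  intro p _ _
  exact mul_nonneg (hx p.1) (hx p.2)

lemma y_succ (μ : ℝ) (hμ : 0 ≤ μ) (g : ℝ) (n : ℕ) :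
    alphaCoeff μ (n+1) * g^(n+1)
      = g * ((∑ p ∈ antidiagonal n,
            (∑ r ∈ antidiagonal p.1,
                (alphaCoeff μ r.1 * g^r.1) * (alphaCoeff μ r.2 * g^r.2)) *
            (∑ r ∈ antidiagonal p.2,
                (alphaCoeff μ r.1 * g^r.1) * (alphaCoeff μ r.2 * g^r.2)))
          + μ * ∑ p ∈ antidiagonal n,
              (alphaCoeff μ p.1 * g^p.1) * (alphaCoeff μ p.2 * g^p.2)) := by
  have hB : ∀ m : ℕ, (∑ r ∈ antidiagonal m, alphaCoeff μ r.1 * alphaCoeff μ r.2) * g^m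
      = ∑ r ∈ antidiagonal m, (alphaCoeff μ r.1 * g^r.1) * (alphaCoeff μ r.2 * g^r.2) := by
    intro m
    rw [Finset.sum_mul]
    refine Finset.sum_congr rfl fun r hr => ?_
    have := Finset.HasAntidiagonal.mem_antidiagonal.mp hr
    rw [← this, pow_add]
    ring
  have h2 : (∑ p ∈ antidiagonal n,
        (∑ r ∈ antidiagonal p.1, alphaCoeff μ r.1 * alphaCoeff μ r.2) *
        (∑ r ∈ antidiagonal p.2, alphaCoeff μ r.1 * alphaCoeff μ r.2)) * g^n
      = ∑ p ∈ antidiagonal n,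
          (∑ r ∈ antidiagonal p.1,
              (alphaCoeff μ r.1 * g^r.1) * (alphaCoeff μ r.2 * g^r.2)) *
          (∑ r ∈ antidiagonal p.2,
              (alphaCoeff μ r.1 * g^r.1) * (alphaCoeff μ r.2 * g^r.2)) := by
    rw [Finset.sum_mul]
    refine Finset.sum_congr rfl fun p hp => ?_
    have hpmem := Finset.HasAntidiagonal.mem_antidiagonal.mp hp
    rw [← hB p.1, ← hB p.2, ← hpmem, pow_add]
    ring
  rw [alpha_rec μ hμ n, pow_succ]
  calc (_ + μ * ∑ p ∈ antidiagonal n, alphaCoeff μ p.1 * alphaCoeff μ p.2) * (g^n * g)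
      = g * (((∑ p ∈ antidiagonal n,
        (∑ r ∈ antidiagonal p.1, alphaCoeff μ r.1 * alphaCoeff μ r.2) *
        (∑ r ∈ antidiagonal p.2, alphaCoeff μ r.1 * alphaCoeff μ r.2)) * g^n)
        + μ * ((∑ p ∈ antidiagonal n, alphaCoeff μ p.1 * alphaCoeff μ p.2) * g^n)) := by
        ring
    _ = _ := by rw [h2, hB n]

lemma partial_sum_le (μ : ℝ) (hμ : 0 ≤ μ) (g G : ℝ) (hg : 0 ≤ g) (hG : 1 ≤ G)
    (hfix : 1 + g * (G^4 + μ * G^2) ≤ G) :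
    ∀ N, ∑ n ∈ range N, alphaCoeff μ n * g^n ≤ G := by
  intro N
  induction N with
  | zero => simp; linarith
  | succ N ih =>
    set y : ℕ → ℝ := fun i => alphaCoeff μ i * g^i with hy
    have hynn : ∀ i, 0 ≤ y i := fun i =>
      mul_nonneg (alpha_nonneg μ hμ i) (pow_nonneg hg i)
    have hS0 : 0 ≤ ∑ n ∈ range N, y n := Finset.sum_nonneg fun i _ => hynn i
    set A2 : ℕ → ℝ := fun m => ∑ p ∈ antidiagonal m, y p.1 * y p.2 with hA2def
    have hA2nn : ∀ m, 0 ≤ A2 m := fun m =>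
      Finset.sum_nonneg fun p _ => mul_nonneg (hynn p.1) (hynn p.2)
    have hsum2 : ∑ n ∈ range N, A2 n ≤ (∑ n ∈ range N, y n)^2 :=
      sum_antidiag_le_sq y hynn N
    have hsum4 : ∑ n ∈ range N, (∑ p ∈ antidiagonal n, A2 p.1 * A2 p.2)
        ≤ (∑ n ∈ range N, A2 n)^2 := sum_antidiag_le_sq A2 hA2nn N
    have hstep : ∑ i ∈ range (N+1), y i
        = 1 + ∑ n ∈ range N, y (n+1) := by
      rw [Finset.sum_range_succ']
      simp only [hy, alpha_zero, pow_zero, mul_one]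
      ring
    have hsucc : ∀ n, y (n+1) = g * ((∑ p ∈ antidiagonal n, A2 p.1 * A2 p.2) + μ * A2 n) := by
      intro n
      exact y_succ μ hμ g n
    have hSN : ∑ n ∈ range N, y (n+1)
        ≤ g * ((∑ n ∈ range N, y n)^4 + μ * (∑ n ∈ range N, y n)^2) := by
      have e1 : ∑ n ∈ range N, y (n+1)
          = g * ((∑ n ∈ range N, ∑ p ∈ antidiagonal n, A2 p.1 * A2 p.2)
              + μ * ∑ n ∈ range N, A2 n) := by
        rw [Finset.sum_congr rfl (fun n _ => hsucc n), ← Finset.mul_sum]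
        congr 1
        rw [Finset.sum_add_distrib, Finset.mul_sum]
      rw [e1]
      have h4 : (∑ n ∈ range N, ∑ p ∈ antidiagonal n, A2 p.1 * A2 p.2)
          ≤ (∑ n ∈ range N, y n)^4 := by
        have := pow_le_pow_left₀ (Finset.sum_nonneg fun m _ => hA2nn m) hsum2 2
        calc (∑ n ∈ range N, ∑ p ∈ antidiagonal n, A2 p.1 * A2 p.2)
            ≤ (∑ n ∈ range N, A2 n)^2 := hsum4
          _ ≤ ((∑ n ∈ range N, y n)^2)^2 := this
          _ = (∑ n ∈ range N, y n)^4 := by ring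
      have h2' : μ * ∑ n ∈ range N, A2 n ≤ μ * (∑ n ∈ range N, y n)^2 :=
        mul_le_mul_of_nonneg_left hsum2 hμ
      have := add_le_add h4 h2'
      exact mul_le_mul_of_nonneg_left this hg
    rw [hstep]
    have hpow4 : (∑ n ∈ range N, y n)^4 ≤ G^4 := pow_le_pow_left₀ hS0 ih 4
    have hpow2 : (∑ n ∈ range N, y n)^2 ≤ G^2 := pow_le_pow_left₀ hS0 ih 2
    have hmono : g * ((∑ n ∈ range N, y n)^4 + μ * (∑ n ∈ range N, y n)^2)
        ≤ g * (G^4 + μ * G^2) := by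
      apply mul_le_mul_of_nonneg_left _ hg
      have := mul_le_mul_of_nonneg_left hpow2 hμ
      linarith
    linarith

/-- For `μ ≥ 0`, with `G_c(μ)` the unique real root `x > 1` of
`−3x³ + 4x² − μx + 2μ = 0` and `g_c(μ) = (G_c − 1)/(G_c²·(G_c² + μ))`, the
series `∑ α_n(μ) g^n` is summable if and only if `0 ≤ g ≤ g_c(μ)`. -/
theorem summable_GLO_iff (μ : ℝ) (hμ : 0 ≤ μ) (Gc : ℝ) (hGc1 : 1 < Gc)
    (hGcRoot : -3 * Gc ^ 3 + 4 * Gc ^ 2 - μ * Gc + 2 * μ = 0)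
    (gc : ℝ) (hgc : gc = (Gc - 1) / (Gc ^ 2 * (Gc ^ 2 + μ))) :
    ∀ g : ℝ, 0 ≤ g →
      (Summable (fun n : ℕ => alphaCoeff μ n * g ^ n) ↔ g ≤ gc) := by
  intro g hg
  have hD : 0 < Gc ^ 2 * (Gc ^ 2 + μ) := by nlinarith
  have hgcD : gc * (Gc ^ 2 * (Gc ^ 2 + μ)) = Gc - 1 := by
    rw [hgc]; field_simp
  constructor
  · -- summable → g ≤ gc
    intro hsum
    set y : ℕ → ℝ := fun n => alphaCoeff μ n * g ^ n with hy
    have hynn : ∀ i, 0 ≤ y i := fun i =>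
      mul_nonneg (alpha_nonneg μ hμ i) (pow_nonneg hg i)
    have hnorm : Summable (fun n => ‖y n‖) := by
      have : (fun n => ‖y n‖) = y := funext fun n => abs_of_nonneg (hynn n)
      rw [this]; exact hsum
    set S := ∑' n, y n with hS
    have hS1 : 1 ≤ S := by
      have h0 : y 0 = 1 := by simp [hy, alpha_zero]
      calc (1:ℝ) = y 0 := h0.symm
        _ ≤ S := Summable.le_tsum hsum 0 fun i _ => hynn i
    set A2 : ℕ → ℝ := fun m => ∑ p ∈ antidiagonal m, y p.1 * y p.2 with hA2def
    have hA2nn : ∀ m, 0 ≤ A2 m := fun m =>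
      Finset.sum_nonneg fun p _ => mul_nonneg (hynn p.1) (hynn p.2)
    have hA2norm : Summable (fun n => ‖A2 n‖) :=
      summable_norm_sum_mul_antidiagonal_of_summable_norm hnorm hnorm
    have hA2sum : Summable A2 := Summable.of_norm hA2norm
    have htA2 : S * S = ∑' n, A2 n :=
      tsum_mul_tsum_eq_tsum_sum_antidiagonal_of_summable_norm hnorm hnorm
    set A4 : ℕ → ℝ := fun m => ∑ p ∈ antidiagonal m, A2 p.1 * A2 p.2 with hA4def
    have hA4norm : Summable (fun n => ‖A4 n‖) :=
      summable_norm_sum_mul_antidiagonal_of_summable_norm hA2norm hA2norm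
    have hA4sum : Summable A4 := Summable.of_norm hA4norm
    have htA4 : (∑' n, A2 n) * (∑' n, A2 n) = ∑' n, A4 n :=
      tsum_mul_tsum_eq_tsum_sum_antidiagonal_of_summable_norm hA2norm hA2norm
    have hFE : S = 1 + g * (S^4 + μ * S^2) := by
      have hshift := Summable.tsum_eq_zero_add hsum
      have hy0 : y 0 = 1 := by simp [hy, alpha_zero]
      have hrec : ∀ n : ℕ, y (n+1) = g * (A4 n + μ * A2 n) := fun n => y_succ μ hμ g n
      have hsum' : Summable (fun n => g * (A4 n + μ * A2 n)) :=
        ((hA4sum.add (hA2sum.mul_left μ)).mul_left g)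
      have ht : ∑' n, y (n+1) = g * ((∑' n, A4 n) + μ * ∑' n, A2 n) := by
        rw [tsum_congr hrec, tsum_mul_left, Summable.tsum_add hA4sum (hA2sum.mul_left μ),
          tsum_mul_left]
      have h4 : ∑' n, A4 n = S^4 := by
        rw [← htA4, ← htA2]; ring
      have h2 : ∑' n, A2 n = S^2 := by rw [← htA2]; ring
      calc S = y 0 + ∑' n, y (n+1) := hshift
        _ = 1 + g * (S^4 + μ * S^2) := by rw [hy0, ht, h4, h2]
    -- key polynomial inequality
    have hkey : (Gc - 1) * (S^4 + μ * S^2) - (S - 1) * (Gc^2 * (Gc^2 + μ))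
        = (S - Gc)^2 * (Gc - 1) * (S^2 + 2*Gc*S + 3*Gc^2 + μ) := by
      linear_combination (Gc^2 - S*Gc) * hGcRoot
    have hQpos : 0 ≤ (S - Gc)^2 * (Gc - 1) * (S^2 + 2*Gc*S + 3*Gc^2 + μ) := by
      apply mul_nonneg (mul_nonneg (sq_nonneg _) (by linarith))
      nlinarith
    have hineq : (S - 1) * (Gc^2 * (Gc^2 + μ)) ≤ (Gc - 1) * (S^4 + μ * S^2) := by
      rw [← hkey] at hQpos
      linarith
    have hSpos : 0 < S^4 + μ * S^2 := by
      have h2 : 1 ≤ S^2 := by nlinarith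
      have h4 : 1 ≤ S^4 := by nlinarith
      have := mul_nonneg hμ (le_trans zero_le_one h2)
      linarith
    have hgD : g * (Gc^2 * (Gc^2 + μ)) ≤ Gc - 1 := by
      have hmul : (g * (Gc^2 * (Gc^2 + μ))) * (S^4 + μ * S^2)
          ≤ (Gc - 1) * (S^4 + μ * S^2) := by
        have hg' : g * (S^4 + μ * S^2) = S - 1 := by linarith [hFE]
        calc (g * (Gc^2 * (Gc^2 + μ))) * (S^4 + μ * S^2)
            = (g * (S^4 + μ * S^2)) * (Gc^2 * (Gc^2 + μ)) := by ring
          _ = (S - 1) * (Gc^2 * (Gc^2 + μ)) := by rw [hg']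
          _ ≤ (Gc - 1) * (S^4 + μ * S^2) := hineq
      exact le_of_mul_le_mul_right hmul hSpos
    rw [hgc, le_div_iff₀ hD]
    exact hgD
  · -- g ≤ gc → summable
    intro hle
    apply summable_of_sum_range_le
      (fun n => mul_nonneg (alpha_nonneg μ hμ n) (pow_nonneg hg n))
    apply partial_sum_le μ hμ g Gc hg (le_of_lt hGc1)
    have : g * (Gc^4 + μ * Gc^2) ≤ gc * (Gc^4 + μ * Gc^2) := by
      apply mul_le_mul_of_nonneg_right hle
      nlinarith
    have h2 : gc * (Gc^4 + μ * Gc^2) = Gc - 1 := by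
      rw [← hgcD]; ring
    linarith
end

section
/- Let μ ≥ 0 be real, let G_c(μ) be the unique real root x > 1 of −3x³ + 4x² − μx + 2μ = 0, set g_c(μ) = (G_c(μ) − 1)/(G_c(μ)²·(G_c(μ)² + μ)) and K(μ) = √( G_c(μ)²·(G_c(μ)² + μ) / (6·G_c(μ)² + μ) ). Let S_μ(g) = ∑_{n=0}^{∞} α_n(μ)·g^n. Then, as g tends to g_c(μ) from the left, the quotient (G_c(μ) − S_μ(g)) / √(1 − g/g_c(μ)) tends to K(μ); in particular K(μ) > 0 and S_μ has a square-root singularity at g_c(μ). -/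
open Filter

namespace GLOaux

noncomputable def iterP (μ : ℝ) : ℕ → Polynomial ℝ
  | 0 => 1
  | (k+1) => 1 + Polynomial.X * ((iterP μ k)^4 + Polynomial.C μ * (iterP μ k)^2)

lemma pmul_congr {f g f' g' : Polynomial ℝ} {m : ℕ}
    (h1 : ∀ i ≤ m, f.coeff i = f'.coeff i) (h2 : ∀ i ≤ m, g.coeff i = g'.coeff i) :
    ∀ i ≤ m, (f*g).coeff i = (f'*g').coeff i := by
  intro i hi
  rw [Polynomial.coeff_mul, Polynomial.coeff_mul]
  refine Finset.sum_congr rfl ?_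
  intro p hp
  rw [Finset.HasAntidiagonal.mem_antidiagonal] at hp
  rw [h1 p.1 (by omega), h2 p.2 (by omega)]

lemma stab (μ : ℝ) : ∀ k, ∀ i ≤ k, (iterP μ (k+1)).coeff i = (iterP μ k).coeff i := by
  intro k
  induction k with
  | zero =>
    intro i hi
    interval_cases i
    simp [iterP]
  | succ k ih =>
    intro i hi
    match i with
    | 0 => simp [iterP]
    | (j+1) =>
      have unf : ∀ m j, (iterP μ (m+1)).coeff (j+1)
          = ((iterP μ m)^4).coeff j + μ * ((iterP μ m)^2).coeff j := by
        intro m j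
        rw [show iterP μ (m+1) = 1 + Polynomial.X * ((iterP μ m)^4 + Polynomial.C μ * (iterP μ m)^2) from rfl]
        simp [Polynomial.coeff_add, Polynomial.coeff_one, Polynomial.coeff_X_mul,
          Polynomial.coeff_C_mul]
      have hle : ∀ i ≤ k, ((iterP μ (k+1))^2).coeff i = ((iterP μ k)^2).coeff i := by
        have := pmul_congr (f := iterP μ (k+1)) (g := iterP μ (k+1))
          (f' := iterP μ k) (g' := iterP μ k) (m := k) ih ih
        simpa [pow_two] using this
      have hle4 : ∀ i ≤ k, ((iterP μ (k+1))^4).coeff i = ((iterP μ k)^4).coeff i := by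
        have := pmul_congr (f := (iterP μ (k+1))^2) (g := (iterP μ (k+1))^2)
          (f' := (iterP μ k)^2) (g' := (iterP μ k)^2) (m := k) hle hle
        intro i hi
        have h4 : ∀ p : Polynomial ℝ, p^4 = p^2 * p^2 := by intro p; ring
        rw [h4, h4]; exact this i hi
      have hj : j ≤ k := by omega
      rw [unf (k+1) j, unf k j, hle4 j hj, hle j hj]

noncomputable def Aseq (μ : ℝ) (n : ℕ) : ℝ := (iterP μ n).coeff n

lemma coeff_iterP (μ : ℝ) : ∀ m n, n ≤ m → (iterP μ m).coeff n = Aseq μ n := by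
  intro m
  induction m with
  | zero => intro n hn; interval_cases n; rfl
  | succ m ih =>
    intro n hn
    rcases Nat.lt_or_ge n (m+1) with h | h
    · rw [stab μ m n (by omega)]; exact ih n (by omega)
    · have : n = m + 1 := by omega
      subst this; rfl


noncomputable def Gps (μ : ℝ) : PowerSeries ℝ := PowerSeries.mk (Aseq μ)
noncomputable def Wps (μ : ℝ) : PowerSeries ℝ :=
  PowerSeries.mk (fun n => if n = 0 then 0 else Aseq μ n)

lemma Aseq_zero (μ : ℝ) : Aseq μ 0 = 1 := by
  simp [Aseq, iterP]

lemma G_eq_one_add_W (μ : ℝ) : Gps μ = 1 + Wps μ := by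
  ext n
  rcases n with _ | n
  · simp [Gps, Wps, Aseq_zero]
  · simp [Gps, Wps]

lemma psmul_congr {f g f' g' : PowerSeries ℝ} {m : ℕ}
    (h1 : ∀ i ≤ m, PowerSeries.coeff i f = PowerSeries.coeff i f')
    (h2 : ∀ i ≤ m, PowerSeries.coeff i g = PowerSeries.coeff i g') :
    ∀ i ≤ m, PowerSeries.coeff i (f*g) = PowerSeries.coeff i (f'*g') := by
  intro i hi
  rw [PowerSeries.coeff_mul, PowerSeries.coeff_mul]
  refine Finset.sum_congr rfl ?_
  intro p hp
  rw [Finset.HasAntidiagonal.mem_antidiagonal] at hp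
  rw [h1 p.1 (by omega), h2 p.2 (by omega)]

lemma pspow_congr {f f' : PowerSeries ℝ} {m : ℕ}
    (h1 : ∀ i ≤ m, PowerSeries.coeff i f = PowerSeries.coeff i f') (j : ℕ) :
    ∀ i ≤ m, PowerSeries.coeff i (f^j) = PowerSeries.coeff i (f'^j) := by
  induction j with
  | zero => intro i hi; simp
  | succ j ih =>
    intro i hi
    rw [pow_succ, pow_succ]
    exact psmul_congr ih h1 i hi

lemma coeff_G_agree (μ : ℝ) (m : ℕ) :
    ∀ i ≤ m, PowerSeries.coeff i (Gps μ) = PowerSeries.coeff i ((iterP μ m : Polynomial ℝ) : PowerSeries ℝ) := by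
  intro i hi
  rw [Polynomial.coeff_coe, coeff_iterP μ m i hi]
  simp [Gps]

lemma coeff_G_pow (μ : ℝ) (j m n : ℕ) (h : n ≤ m) :
    PowerSeries.coeff n ((Gps μ)^j) = ((iterP μ m)^j).coeff n := by
  rw [pspow_congr (coeff_G_agree μ m) j n h, ← Polynomial.coe_pow, Polynomial.coeff_coe]

lemma W_eq (μ : ℝ) :
    Wps μ = PowerSeries.X * ((Gps μ)^4 + PowerSeries.C μ * (Gps μ)^2) := by
  ext n
  rcases n with _ | n
  · simp [Wps]
  · rw [PowerSeries.coeff_succ_X_mul]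
    have unf : (iterP μ (n+1)).coeff (n+1)
        = ((iterP μ n)^4).coeff n + μ * ((iterP μ n)^2).coeff n := by
      rw [show iterP μ (n+1) = 1 + Polynomial.X * ((iterP μ n)^4 + Polynomial.C μ * (iterP μ n)^2) from rfl]
      simp [Polynomial.coeff_add, Polynomial.coeff_one, Polynomial.coeff_X_mul,
        Polynomial.coeff_C_mul]
    simp only [Wps, PowerSeries.coeff_mk, Nat.succ_ne_zero, if_false]
    rw [show Aseq μ (n+1) = (iterP μ (n+1)).coeff (n+1) from rfl, unf]
    rw [map_add, PowerSeries.coeff_C_mul, coeff_G_pow μ 4 n n le_rfl, coeff_G_pow μ 2 n n le_rfl]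


noncomputable def phiP (μ : ℝ) : Polynomial ℝ :=
  (Polynomial.X + 1)^4 + Polynomial.C μ * (Polynomial.X + 1)^2

lemma aeval_phi (μ : ℝ) :
    Polynomial.aeval (Wps μ) (phiP μ) = (Gps μ)^4 + PowerSeries.C μ * (Gps μ)^2 := by
  have hG : Wps μ + 1 = Gps μ := by
    rw [add_comm]; exact (G_eq_one_add_W μ).symm
  simp only [phiP, map_add, map_mul, map_pow, Polynomial.aeval_X, Polynomial.aeval_one,
    Polynomial.aeval_C]
  rw [hG]
  rfl

lemma W_eq' (μ : ℝ) : Wps μ = PowerSeries.X * Polynomial.aeval (Wps μ) (phiP μ) := by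
  rw [aeval_phi]; exact W_eq μ

lemma coeff_X_pow_mul' (f : PowerSeries ℝ) (k n : ℕ) :
    PowerSeries.coeff n (PowerSeries.X^k * f)
      = if k ≤ n then PowerSeries.coeff (n - k) f else 0 := by
  by_cases h : k ≤ n
  · obtain ⟨d, rfl⟩ : ∃ d, n = d + k := ⟨n - k, by omega⟩
    rw [if_pos h, PowerSeries.coeff_X_pow_mul, Nat.add_sub_cancel]
  · rw [if_neg h, PowerSeries.coeff_mul]
    refine Finset.sum_eq_zero ?_
    intro p hp
    rw [Finset.HasAntidiagonal.mem_antidiagonal] at hp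
    rw [PowerSeries.coeff_X_pow, if_neg (by omega), zero_mul]

lemma Wpow_eq (μ : ℝ) (k : ℕ) :
    (Wps μ)^k = PowerSeries.X^k * Polynomial.aeval (Wps μ) ((phiP μ)^k) := by
  rw [map_pow]
  conv_lhs => rw [W_eq' μ]
  ring

lemma W_ord (μ : ℝ) (k n : ℕ) (h : n < k) : PowerSeries.coeff n ((Wps μ)^k) = 0 := by
  rw [Wpow_eq, coeff_X_pow_mul', if_neg (by omega)]

lemma constantCoeff_W (μ : ℝ) : PowerSeries.constantCoeff (Wps μ) = 0 := by
  simp [Wps, ← PowerSeries.coeff_zero_eq_constantCoeff]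

lemma coeff_aeval (μ : ℝ) (q : Polynomial ℝ) (m : ℕ) :
    PowerSeries.coeff m (Polynomial.aeval (Wps μ) q)
      = ∑ j ∈ Finset.range (q.natDegree + 1), q.coeff j * PowerSeries.coeff m ((Wps μ)^j) := by
  rw [Polynomial.aeval_eq_sum_range, map_sum]
  refine Finset.sum_congr rfl ?_
  intro j _
  rw [LinearMap.map_smul, smul_eq_mul]


lemma lagrange (μ : ℝ) : ∀ n k : ℕ, 1 ≤ k → k ≤ n →
    PowerSeries.coeff n ((Wps μ)^k) = (k / n : ℝ) * ((phiP μ)^n).coeff (n - k) := by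
  intro n
  induction n using Nat.strong_induction_on with
  | _ n IH =>
  intro k hk hkn
  have hn1 : 1 ≤ n := le_trans hk hkn
  set m := n - k with hm
  have hcoeff : PowerSeries.coeff n ((Wps μ)^k)
      = ∑ j ∈ Finset.range (((phiP μ)^k).natDegree + 1),
          ((phiP μ)^k).coeff j * PowerSeries.coeff m ((Wps μ)^j) := by
    rw [Wpow_eq, coeff_X_pow_mul', if_pos hkn, ← hm, coeff_aeval]
  rcases Nat.eq_or_lt_of_le hkn with heq | hlt
  · -- n = k, m = 0
    subst heq
    have hm0 : m = 0 := by omega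
    rw [hcoeff, hm0, Finset.sum_eq_single 0]
    · have h1 : PowerSeries.coeff 0 ((Wps μ)^0) = 1 := by simp
      rw [h1, mul_one]
      rw [div_self (Nat.cast_ne_zero.mpr (by omega) : (k:ℝ) ≠ 0), one_mul]
    · intro j _ hj
      have : PowerSeries.coeff 0 ((Wps μ)^j) = 0 := by
        rw [PowerSeries.coeff_zero_eq_constantCoeff, map_pow, constantCoeff_W,
          zero_pow hj]
      rw [this, mul_zero]
    · intro h
      exact absurd (Finset.mem_range.mpr (Nat.succ_pos _)) h
  · -- k < n, m ≥ 1
    have hm1 : 1 ≤ m := by omega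
    have hmn : m < n := by omega
    set c : ℕ → ℝ := fun j => ((phiP μ)^k).coeff j with hc
    set e : ℕ → ℝ := fun i => ((phiP μ)^m).coeff i with he
    set F : ℕ → ℝ := fun j => if 1 ≤ j ∧ j ≤ m then c j * j * e (m - j) else 0 with hF
    have hterm : ∀ j, c j * PowerSeries.coeff m ((Wps μ)^j) = (1/(m:ℝ)) * F j := by
      intro j
      rcases Nat.eq_zero_or_pos j with rfl | hj1
      · simp only [hF, pow_zero]
        rw [show PowerSeries.coeff m (1 : PowerSeries ℝ) = 0 by
          rw [PowerSeries.coeff_one, if_neg (by omega)]]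
        simp
      · by_cases hjm : j ≤ m
        · rw [IH m hmn j hj1 hjm]
          simp only [hF, he]
          rw [if_pos ⟨hj1, hjm⟩]
          have hmne : (m:ℝ) ≠ 0 := Nat.cast_ne_zero.mpr (by omega)
          field_simp
        · rw [W_ord μ j m (by omega)]
          simp only [hF]
          rw [if_neg (fun hcon => hjm hcon.2)]
          simp
    have hS1 : PowerSeries.coeff n ((Wps μ)^k)
        = (1/(m:ℝ)) * ∑ j ∈ Finset.range (((phiP μ)^k).natDegree + 1), F j := by
      rw [hcoeff, Finset.mul_sum]
      exact Finset.sum_congr rfl fun j _ => hterm j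
    set N := ((phiP μ)^k).natDegree + m + 1 with hN
    have hext : ∑ j ∈ Finset.range (((phiP μ)^k).natDegree + 1), F j
        = ∑ j ∈ Finset.range (N + 1), F j := by
      refine Finset.sum_subset ?_ ?_
      · intro x hx
        rw [Finset.mem_range] at hx ⊢
        omega
      · intro x _ hx
        rw [Finset.mem_range] at hx
        have : c x = 0 := Polynomial.coeff_eq_zero_of_natDegree_lt (by omega)
        simp only [hF]
        split_ifs <;> simp [this]
    have hFi : ∀ i ∈ Finset.range m, F (i+1) = c (i+1) * ((i:ℝ)+1) * e (m - 1 - i) := by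
      intro i hi
      rw [Finset.mem_range] at hi
      simp only [hF]
      rw [if_pos (by omega), show m - (i+1) = m - 1 - i from by omega]
      push_cast
      ring
    have hshift : ∑ j ∈ Finset.range (N + 1), F j
        = ∑ i ∈ Finset.range m, c (i+1) * ((i:ℝ)+1) * e (m - 1 - i) := by
      rw [Finset.sum_range_succ']
      have hF0 : F 0 = 0 := by simp [hF]
      rw [hF0, add_zero]
      calc ∑ i ∈ Finset.range N, F (i+1)
          = ∑ i ∈ Finset.range m, F (i+1) := by
            refine (Finset.sum_subset ?_ ?_).symm
            · intro x hx
              rw [Finset.mem_range] at hx ⊢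
              omega
            · intro x _ hx
              rw [Finset.mem_range] at hx
              simp only [hF]
              rw [if_neg (by omega)]
        _ = ∑ i ∈ Finset.range m, c (i+1) * ((i:ℝ)+1) * e (m - 1 - i) :=
            Finset.sum_congr rfl hFi
    have hder : ∑ i ∈ Finset.range m, c (i+1) * ((i:ℝ)+1) * e (m - 1 - i)
        = (Polynomial.derivative ((phiP μ)^k) * (phiP μ)^m).coeff (m - 1) := by
      rw [Polynomial.coeff_mul, Finset.Nat.sum_antidiagonal_eq_sum_range_succ_mk,
        show (m - 1).succ = m from by omega]
      refine Finset.sum_congr rfl ?_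
      intro i _
      rw [Polynomial.coeff_derivative]
      try push_cast
      try ring
    have hkey : Polynomial.derivative ((phiP μ)^k) * (phiP μ)^m
        = Polynomial.C (k:ℝ) * ((phiP μ)^(n-1) * Polynomial.derivative (phiP μ)) := by
      rw [Polynomial.derivative_pow]
      rw [show (phiP μ)^(n-1) = (phiP μ)^(k-1) * (phiP μ)^m from by
        rw [← pow_add, show k - 1 + m = n - 1 from by omega]]
      ring
    have hkey2 : Polynomial.derivative ((phiP μ)^n)
        = Polynomial.C (n:ℝ) * ((phiP μ)^(n-1) * Polynomial.derivative (phiP μ)) := by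
      rw [Polynomial.derivative_pow]
      ring
    have hcn : ((phiP μ)^n).coeff m * (m:ℝ)
        = (n:ℝ) * ((phiP μ)^(n-1) * Polynomial.derivative (phiP μ)).coeff (m-1) := by
      have h := Polynomial.coeff_derivative ((phiP μ)^n) (m-1)
      rw [show m - 1 + 1 = m from by omega, hkey2, Polynomial.coeff_C_mul] at h
      have hmc : ((m-1:ℕ):ℝ) + 1 = (m:ℝ) := by
        rw [Nat.cast_sub hm1]
        push_cast
        ring
      rw [hmc] at h
      linarith
    rw [hS1, hext, hshift, hder, hkey, Polynomial.coeff_C_mul]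
    have hmne : ((m:ℝ)) ≠ 0 := Nat.cast_ne_zero.mpr (by omega)
    have hnne : ((n:ℝ)) ≠ 0 := Nat.cast_ne_zero.mpr (by omega)
    have hQ : ((phiP μ)^(n-1) * Polynomial.derivative (phiP μ)).coeff (m-1)
        = ((phiP μ)^n).coeff m * (m:ℝ) / (n:ℝ) := by
      rw [eq_div_iff hnne]
      rw [hcn]
      ring
    rw [hQ]
    field_simp


lemma phi_pow_expand (μ : ℝ) (n : ℕ) : (phiP μ)^n
    = ∑ q ∈ Finset.range (n+1),
        Polynomial.C (μ^q * (n.choose q : ℝ)) * (Polynomial.X + 1)^(4*n - 2*q) := by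
  rw [phiP, add_comm ((Polynomial.X+1)^4), add_pow]
  refine Finset.sum_congr rfl ?_
  intro q hq
  rw [Finset.mem_range] at hq
  have hcast : ((n.choose q : ℕ) : Polynomial ℝ) = Polynomial.C ((n.choose q : ℝ)) := by simp
  rw [mul_pow, ← pow_mul, ← pow_mul, ← map_pow, hcast,
    show 4*n - 2*q = 2*q + 4*(n-q) from by omega, pow_add, map_mul]
  ring

lemma coeff_phi_pow (μ : ℝ) (n i : ℕ) : ((phiP μ)^n).coeff i
    = ∑ q ∈ Finset.range (n+1), μ^q * (n.choose q : ℝ) * ((4*n - 2*q).choose i : ℝ) := by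
  rw [phi_pow_expand, Polynomial.finset_sum_coeff]
  refine Finset.sum_congr rfl ?_
  intro q _
  rw [Polynomial.coeff_C_mul, Polynomial.coeff_X_add_one_pow]

lemma Aseq_eq_alpha (μ : ℝ) (n : ℕ) : Aseq μ n = alphaCoeff μ n := by
  rcases Nat.eq_zero_or_pos n with rfl | hn
  · rw [Aseq_zero]
    simp [alphaCoeff]
  · have h1 : Aseq μ n = PowerSeries.coeff n ((Wps μ)^1) := by
      rw [pow_one]
      simp only [Wps, PowerSeries.coeff_mk]
      rw [if_neg (by omega)]
    rw [h1, lagrange μ n 1 le_rfl hn, coeff_phi_pow, alphaCoeff, Finset.mul_sum]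
    refine Finset.sum_congr rfl ?_
    intro q hq
    rw [Finset.mem_range] at hq
    have hqn : q ≤ n := by omega
    have hM : 4*n - 2*q ≥ n := by omega
    have hchoose : (4*n - 2*q).choose n * n = (4*n - 2*q).choose (n-1) * (3*n - 2*q + 1) := by
      have h := Nat.choose_succ_right_eq (4*n - 2*q) (n-1)
      rw [show n - 1 + 1 = n from by omega] at h
      rw [h, show 4*n - 2*q - (n-1) = 3*n - 2*q + 1 from by omega]
    have hcR : ((4*n - 2*q).choose n : ℝ) * n
        = ((4*n - 2*q).choose (n-1) : ℝ) * (3*(n:ℝ) - 2*q + 1) := by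
      have h2 := congrArg (fun t : ℕ => (t : ℝ)) hchoose
      push_cast [show 2*q ≤ 3*n from by omega] at h2
      linarith [h2]
    have hden : (0:ℝ) < 3*(n:ℝ) - 2*(q:ℝ) + 1 := by
      have : (q:ℝ) ≤ (n:ℝ) := by exact_mod_cast hqn
      have hn' : (1:ℝ) ≤ (n:ℝ) := by exact_mod_cast hn
      nlinarith
    have hnne : ((n:ℝ)) ≠ 0 := Nat.cast_ne_zero.mpr (by omega)
    rw [Nat.cast_one]
    have hden' : (3*(n:ℝ) - 2*(q:ℝ) + 1) ≠ 0 := hden.ne'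
    field_simp
    rw [eq_div_iff (by linarith)]
    first
    | linear_combination (μ ^ q * (n.choose q : ℝ)) * hcR
    | linear_combination (-(μ ^ q * (n.choose q : ℝ))) * hcR

lemma alpha_zero (μ : ℝ) : alphaCoeff μ 0 = 1 := by
  rw [← Aseq_eq_alpha, Aseq_zero]

noncomputable def Bcf (μ : ℝ) (m : ℕ) : ℝ :=
  ∑ p ∈ Finset.HasAntidiagonal.antidiagonal m, alphaCoeff μ p.1 * alphaCoeff μ p.2

lemma coeff_G_sq (μ : ℝ) (m : ℕ) : PowerSeries.coeff m ((Gps μ)^2) = Bcf μ m := by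
  rw [pow_two, PowerSeries.coeff_mul, Bcf]
  refine Finset.sum_congr rfl ?_
  intro p _
  simp [Gps, Aseq_eq_alpha]

lemma alpha_rec (μ : ℝ) (n : ℕ) :
    alphaCoeff μ (n+1)
      = (∑ p ∈ Finset.HasAntidiagonal.antidiagonal n, Bcf μ p.1 * Bcf μ p.2) + μ * Bcf μ n := by
  have hW := congrArg (PowerSeries.coeff (n+1)) (W_eq μ)
  rw [PowerSeries.coeff_succ_X_mul] at hW
  have hL : PowerSeries.coeff (n+1) (Wps μ) = alphaCoeff μ (n+1) := by
    simp [Wps, Aseq_eq_alpha]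
  rw [hL] at hW
  rw [hW, map_add, PowerSeries.coeff_C_mul, coeff_G_sq]
  congr 1
  rw [show (Gps μ)^4 = (Gps μ)^2 * (Gps μ)^2 from by ring, PowerSeries.coeff_mul]
  refine Finset.sum_congr rfl ?_
  intro p _
  rw [coeff_G_sq, coeff_G_sq]

lemma alpha_nonneg {μ : ℝ} (hμ : 0 ≤ μ) (n : ℕ) : 0 ≤ alphaCoeff μ n := by
  refine Finset.sum_nonneg ?_
  intro q hq
  rw [Finset.mem_range] at hq
  have hden : (0:ℝ) < 3*(n:ℝ) - 2*(q:ℝ) + 1 := by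
    have : (q:ℝ) ≤ (n:ℝ) := by exact_mod_cast (by omega : q ≤ n)
    nlinarith
  have h1 : (0:ℝ) ≤ μ^q := pow_nonneg hμ q
  positivity


/-! ### Part B: analytic lemmas -/

noncomputable def psi (μ y : ℝ) : ℝ := (y - 1) / (y^4 + μ*y^2)

lemma KSI {u : ℕ → ℝ} (hu : ∀ i, 0 ≤ u i) {g : ℝ} (hg : 0 ≤ g) (N : ℕ) :
    ∑ i ∈ Finset.range N, (∑ p ∈ Finset.HasAntidiagonal.antidiagonal i, u p.1 * u p.2) * g^i
      ≤ (∑ i ∈ Finset.range N, u i * g^i)^2 := by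
  have hterm : ∀ i ∈ Finset.range N,
      (∑ p ∈ Finset.HasAntidiagonal.antidiagonal i, u p.1 * u p.2) * g^i
        = ∑ p ∈ Finset.HasAntidiagonal.antidiagonal i, (u p.1 * g^p.1) * (u p.2 * g^p.2) := by
    intro i _
    rw [Finset.sum_mul]
    refine Finset.sum_congr rfl ?_
    intro p hp
    rw [Finset.HasAntidiagonal.mem_antidiagonal] at hp
    rw [← hp, pow_add]
    ring
  rw [Finset.sum_congr rfl hterm]
  have hdisj : (↑(Finset.range N) : Set ℕ).PairwiseDisjoint Finset.HasAntidiagonal.antidiagonal := by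
    intro i _ j _ hij
    simp only [Function.onFun]
    rw [Finset.disjoint_left]
    intro p hpi hpj
    rw [Finset.HasAntidiagonal.mem_antidiagonal] at hpi hpj
    exact hij (hpi ▸ hpj)
  rw [← Finset.sum_biUnion hdisj]
  have hsub : (Finset.range N).biUnion Finset.HasAntidiagonal.antidiagonal
      ⊆ Finset.range N ×ˢ Finset.range N := by
    intro p hp
    rw [Finset.mem_biUnion] at hp
    obtain ⟨i, hi, hpi⟩ := hp
    rw [Finset.mem_range] at hi
    rw [Finset.HasAntidiagonal.mem_antidiagonal] at hpi
    rw [Finset.mem_product, Finset.mem_range, Finset.mem_range]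
    omega
  calc ∑ p ∈ (Finset.range N).biUnion Finset.HasAntidiagonal.antidiagonal, (u p.1 * g^p.1) * (u p.2 * g^p.2)
      ≤ ∑ p ∈ Finset.range N ×ˢ Finset.range N, (u p.1 * g^p.1) * (u p.2 * g^p.2) := by
        refine Finset.sum_le_sum_of_subset_of_nonneg hsub ?_
        intro p _ _
        have := hu p.1
        have := hu p.2
        positivity
    _ = (∑ i ∈ Finset.range N, u i * g^i)^2 := by
        rw [pow_two, Finset.sum_mul_sum, Finset.sum_product]

section main
variable {μ Gc : ℝ}

lemma cubic_mono (hμ : 0 ≤ μ) : ∀ a b : ℝ, 1 ≤ a → a < b →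
    3*a^3 - 4*a^2 + μ*a - 2*μ < 3*b^3 - 4*b^2 + μ*b - 2*μ := by
  intro a b ha hab
  nlinarith [sq_nonneg (a+b-2), sq_nonneg (a-b), sq_nonneg (a+b), mul_pos (by linarith : (0:ℝ) < b - a) (by linarith : (0:ℝ) < a)]

lemma cubic_neg (hμ : 0 ≤ μ) (hGc1 : 1 < Gc)
    (hGcRoot : -3 * Gc ^ 3 + 4 * Gc ^ 2 - μ * Gc + 2 * μ = 0) :
    ∀ y, 1 ≤ y → y < Gc → 3*y^3 - 4*y^2 + μ*y - 2*μ < 0 := by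
  intro y h1 h2
  have := cubic_mono hμ y Gc h1 h2
  nlinarith

lemma Dpos (hμ : 0 ≤ μ) : ∀ y : ℝ, 0 < y → 0 < y^4 + μ*y^2 := by
  intro y hy
  nlinarith [pow_pos hy 4, pow_pos hy 2, mul_nonneg hμ (le_of_lt (pow_pos hy 2))]

lemma psi_contOn (hμ : 0 ≤ μ) (hGc1 : 1 < Gc) :
    ContinuousOn (psi μ) (Set.Icc 1 Gc) := by
  refine ContinuousOn.div (by fun_prop) (by fun_prop) ?_
  intro y hy
  rw [Set.mem_Icc] at hy
  exact (Dpos hμ y (by linarith)).ne'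

lemma psi_mono (hμ : 0 ≤ μ) (hGc1 : 1 < Gc)
    (hGcRoot : -3 * Gc ^ 3 + 4 * Gc ^ 2 - μ * Gc + 2 * μ = 0) :
    StrictMonoOn (psi μ) (Set.Icc 1 Gc) := by
  refine strictMonoOn_of_deriv_pos (convex_Icc 1 Gc) (psi_contOn hμ hGc1) ?_
  intro y hy
  rw [interior_Icc, Set.mem_Ioo] at hy
  have hy0 : 0 < y := by linarith
  have hDne : y^4 + μ*y^2 ≠ 0 := (Dpos hμ y hy0).ne'
  have h1 : HasDerivAt (fun x : ℝ => x - 1) 1 y := (hasDerivAt_id y).sub_const 1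
  have h2 : HasDerivAt (fun x : ℝ => x^4 + μ*x^2) ((4:ℝ)*y^3 + μ*((2:ℝ)*y)) y := by
    have ha := hasDerivAt_pow 4 y
    have hb := (hasDerivAt_pow 2 y).const_mul μ
    have hab := ha.add hb
    norm_num at hab
    exact hab
  have h3 : HasDerivAt (psi μ)
      ((1*(y^4 + μ*y^2) - (y-1)*((4:ℝ)*y^3 + μ*((2:ℝ)*y))) / (y^4 + μ*y^2)^2) y :=
    h1.div h2 hDne
  rw [h3.deriv]
  apply div_pos
  · have hc := cubic_neg hμ hGc1 hGcRoot y (le_of_lt hy.1) hy.2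
    nlinarith
  · positivity

lemma psi_one (μ : ℝ) : psi μ 1 = 0 := by
  simp [psi]

lemma psi_Gc (hμ : 0 ≤ μ) (hGc1 : 1 < Gc) :
    psi μ Gc = (Gc - 1) / (Gc ^ 2 * (Gc ^ 2 + μ)) := by
  rw [psi]
  congr 1
  ring


lemma Skey (hμ : 0 ≤ μ) (hGc1 : 1 < Gc)
    (hGcRoot : -3 * Gc ^ 3 + 4 * Gc ^ 2 - μ * Gc + 2 * μ = 0)
    {g : ℝ} (hg : g ∈ Set.Ioo 0 ((Gc - 1) / (Gc ^ 2 * (Gc ^ 2 + μ)))) :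
    1 < (∑' n : ℕ, alphaCoeff μ n * g ^ n) ∧ (∑' n : ℕ, alphaCoeff μ n * g ^ n) < Gc ∧
      psi μ (∑' n : ℕ, alphaCoeff μ n * g ^ n) = g := by
  obtain ⟨hg0, hggc⟩ := hg
  -- the implicit solution x
  have hIV := intermediate_value_Ioo (le_of_lt hGc1) (psi_contOn hμ hGc1)
  rw [psi_one, psi_Gc hμ hGc1] at hIV
  obtain ⟨x, hxmem, hpsix⟩ := hIV ⟨hg0, hggc⟩
  rw [Set.mem_Ioo] at hxmem
  have hx1 : 1 < x := hxmem.1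
  have hxG : x < Gc := hxmem.2
  have hx0 : 0 < x := by linarith
  have hDx : 0 < x^4 + μ*x^2 := Dpos hμ x hx0
  have hxfix : x = 1 + g*(x^4 + μ*x^2) := by
    have := hpsix
    rw [psi, div_eq_iff hDx.ne'] at this
    linarith
  set f : ℕ → ℝ := fun n => alphaCoeff μ n * g ^ n with hf
  have hnn : ∀ n, 0 ≤ f n := fun n =>
    mul_nonneg (alpha_nonneg hμ n) (pow_nonneg (le_of_lt hg0) n)
  have hBnn : ∀ n, 0 ≤ Bcf μ n := by
    intro n
    refine Finset.sum_nonneg fun p _ => mul_nonneg (alpha_nonneg hμ _) (alpha_nonneg hμ _)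
  -- partial sum bound
  have hbound : ∀ N, ∑ i ∈ Finset.range N, f i ≤ x := by
    intro N
    induction N with
    | zero => simp; linarith
    | succ N ih =>
      have hPnn : 0 ≤ ∑ i ∈ Finset.range N, f i :=
        Finset.sum_nonneg fun i _ => hnn i
      rw [Finset.sum_range_succ']
      have hf0 : f 0 = 1 := by simp [hf, alpha_zero]
      have hstep : ∀ i, f (i+1)
          = g * (((∑ p ∈ Finset.HasAntidiagonal.antidiagonal i, Bcf μ p.1 * Bcf μ p.2) * g^i)
              + μ * (Bcf μ i * g^i)) := by
        intro i
        simp only [hf]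
        rw [alpha_rec, pow_succ]
        ring
      rw [hf0]
      have hsum1 : ∑ i ∈ Finset.range N, f (i+1)
          = g * ((∑ i ∈ Finset.range N, (∑ p ∈ Finset.HasAntidiagonal.antidiagonal i, Bcf μ p.1 * Bcf μ p.2) * g^i)
              + μ * (∑ i ∈ Finset.range N, Bcf μ i * g^i)) := by
        rw [Finset.sum_congr rfl (fun i _ => hstep i), ← Finset.mul_sum]
        congr 1
        rw [Finset.sum_add_distrib, ← Finset.mul_sum]
      rw [hsum1]
      -- key chains
      have hB2 : ∑ i ∈ Finset.range N, Bcf μ i * g^i ≤ (∑ i ∈ Finset.range N, f i)^2 := by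
        have h1 : ∑ i ∈ Finset.range N, Bcf μ i * g^i
            ≤ (∑ i ∈ Finset.range N, alphaCoeff μ i * g^i)^2 :=
          KSI (fun i => alpha_nonneg hμ i) (le_of_lt hg0) N
        exact h1
      have hBB : ∑ i ∈ Finset.range N, (∑ p ∈ Finset.HasAntidiagonal.antidiagonal i, Bcf μ p.1 * Bcf μ p.2) * g^i
          ≤ (∑ i ∈ Finset.range N, Bcf μ i * g^i)^2 :=
        KSI hBnn (le_of_lt hg0) N
      have hBpos : 0 ≤ ∑ i ∈ Finset.range N, Bcf μ i * g^i :=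
        Finset.sum_nonneg fun i _ => mul_nonneg (hBnn i) (pow_nonneg (le_of_lt hg0) i)
      have hP2 : (∑ i ∈ Finset.range N, f i)^2 ≤ x^2 := by nlinarith
      have hc1 : ∑ i ∈ Finset.range N, Bcf μ i * g^i ≤ x^2 := le_trans hB2 hP2
      have hc2 : (∑ i ∈ Finset.range N, Bcf μ i * g^i)^2 ≤ x^4 := by nlinarith
      have hSBB : ∑ i ∈ Finset.range N, (∑ p ∈ Finset.HasAntidiagonal.antidiagonal i, Bcf μ p.1 * Bcf μ p.2) * g^i
          ≤ x^4 := le_trans hBB hc2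
      have hmu : μ * (∑ i ∈ Finset.range N, Bcf μ i * g^i) ≤ μ * x^2 :=
        mul_le_mul_of_nonneg_left hc1 hμ
      have hgmul : g * ((∑ i ∈ Finset.range N, (∑ p ∈ Finset.HasAntidiagonal.antidiagonal i, Bcf μ p.1 * Bcf μ p.2) * g^i)
            + μ * (∑ i ∈ Finset.range N, Bcf μ i * g^i)) ≤ g * (x^4 + μ*x^2) :=
        mul_le_mul_of_nonneg_left (by linarith) (le_of_lt hg0)
      linarith
  have hsummable : Summable f := summable_of_sum_range_le hnn hbound
  have hSx : (∑' n, f n) ≤ x := Summable.tsum_le_of_sum_range_le hsummable hbound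
  have hS1 : 1 ≤ ∑' n, f n := by
    have := Summable.le_tsum hsummable 0 (fun j _ => hnn j)
    simpa [hf, alpha_zero] using this
  set S := ∑' n, f n with hSdef
  -- Cauchy products
  have habs : Summable (fun n => ‖f n‖) := by
    simpa [Real.norm_eq_abs, abs_of_nonneg (hnn _)] using hsummable
  have hinner : ∀ n : ℕ, ∑ p ∈ Finset.HasAntidiagonal.antidiagonal n, f p.1 * f p.2 = Bcf μ n * g^n := by
    intro n
    rw [Bcf, Finset.sum_mul]
    refine Finset.sum_congr rfl ?_
    intro p hp
    rw [Finset.HasAntidiagonal.mem_antidiagonal] at hp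
    simp only [hf]
    rw [← hp, pow_add]
    ring
  have hsumB : Summable (fun n => Bcf μ n * g^n) := by
    have := (summable_norm_sum_mul_antidiagonal_of_summable_norm habs habs).of_norm
    exact (summable_congr hinner).mp this
  have hS2 : S^2 = ∑' n, Bcf μ n * g^n := by
    rw [pow_two, hSdef, tsum_mul_tsum_eq_tsum_sum_antidiagonal_of_summable_norm habs habs]
    exact tsum_congr hinner
  set fB : ℕ → ℝ := fun n => Bcf μ n * g^n with hfB
  have hBabs : Summable (fun n => ‖fB n‖) := by
    have : ∀ n, 0 ≤ fB n := fun n => mul_nonneg (hBnn n) (pow_nonneg (le_of_lt hg0) n)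
    simpa [Real.norm_eq_abs, abs_of_nonneg (this _)] using hsumB
  have hinnerB : ∀ n : ℕ, ∑ p ∈ Finset.HasAntidiagonal.antidiagonal n, fB p.1 * fB p.2
      = (∑ p ∈ Finset.HasAntidiagonal.antidiagonal n, Bcf μ p.1 * Bcf μ p.2) * g^n := by
    intro n
    rw [Finset.sum_mul]
    refine Finset.sum_congr rfl ?_
    intro p hp
    rw [Finset.HasAntidiagonal.mem_antidiagonal] at hp
    simp only [hfB]
    rw [← hp, pow_add]
    ring
  have hsumBB : Summable (fun n => (∑ p ∈ Finset.HasAntidiagonal.antidiagonal n, Bcf μ p.1 * Bcf μ p.2) * g^n) := by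
    have := (summable_norm_sum_mul_antidiagonal_of_summable_norm hBabs hBabs).of_norm
    exact (summable_congr hinnerB).mp this
  have hS4 : S^4 = ∑' n, (∑ p ∈ Finset.HasAntidiagonal.antidiagonal n, Bcf μ p.1 * Bcf μ p.2) * g^n := by
    have : S^4 = S^2 * S^2 := by ring
    rw [this, hS2, tsum_mul_tsum_eq_tsum_sum_antidiagonal_of_summable_norm hBabs hBabs]
    exact tsum_congr hinnerB
  -- functional equation
  have hfe : S = 1 + g * (S^4 + μ * S^2) := by
    have h0 : S = f 0 + ∑' n, f (n+1) := Summable.tsum_eq_zero_add hsummable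
    have hf0 : f 0 = 1 := by simp [hf, alpha_zero]
    have hfsucc : ∀ n : ℕ, f (n+1)
        = g * ((∑ p ∈ Finset.HasAntidiagonal.antidiagonal n, Bcf μ p.1 * Bcf μ p.2) * g^n + μ * (Bcf μ n * g^n)) := by
      intro n
      simp only [hf]
      rw [alpha_rec, pow_succ]
      ring
    rw [hfB] at hS2
    have hR : ∑' n, f (n+1) = g * (S^4 + μ * S^2) := by
      rw [tsum_congr hfsucc, tsum_mul_left, Summable.tsum_add hsumBB (hsumB.mul_left μ),
        tsum_mul_left, ← hS4, ← hS2]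
    calc S = f 0 + ∑' n, f (n+1) := h0
    _ = 1 + g * (S^4 + μ*S^2) := by rw [hf0, hR]
  have hDS : 0 < S^4 + μ*S^2 := Dpos hμ S (by linarith)
  have hSgt1 : 1 < S := by nlinarith
  have hpsiS : psi μ S = g := by
    rw [psi, div_eq_iff hDS.ne']
    linarith [hfe]
  exact ⟨hSgt1, lt_of_le_of_lt hSx hxG, hpsiS⟩


lemma Stendsto (hμ : 0 ≤ μ) (hGc1 : 1 < Gc)
    (hGcRoot : -3 * Gc ^ 3 + 4 * Gc ^ 2 - μ * Gc + 2 * μ = 0) :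
    Filter.Tendsto (fun g : ℝ => ∑' n : ℕ, alphaCoeff μ n * g ^ n)
      (nhdsWithin ((Gc - 1) / (Gc ^ 2 * (Gc ^ 2 + μ)))
        (Set.Ioo 0 ((Gc - 1) / (Gc ^ 2 * (Gc ^ 2 + μ))))) (nhds Gc) := by
  rw [Metric.tendsto_nhdsWithin_nhds]
  intro ε hε
  set gc := (Gc - 1) / (Gc ^ 2 * (Gc ^ 2 + μ)) with hgc
  set ε' := min (ε/2) ((Gc-1)/2) with hε'def
  have hε' : 0 < ε' := lt_min (by linarith) (by linarith)
  have hε'2 : ε' ≤ ε/2 := min_le_left _ _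
  have hε'G : ε' ≤ (Gc-1)/2 := min_le_right _ _
  set y0 := Gc - ε' with hy0def
  have hy01 : 1 ≤ y0 := by
    simp only [hy0def]
    linarith
  have hy0G : y0 < Gc := by
    simp only [hy0def]
    linarith
  have hmono := psi_mono hμ hGc1 hGcRoot
  have hlt : psi μ y0 < psi μ Gc :=
    hmono (Set.mem_Icc.mpr ⟨hy01, hy0G.le⟩) (Set.mem_Icc.mpr ⟨hGc1.le, le_rfl⟩) hy0G
  rw [psi_Gc hμ hGc1, ← hgc] at hlt
  refine ⟨gc - psi μ y0, by linarith, ?_⟩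
  intro g hg hdist
  obtain ⟨hS1, hSG, hpsiS⟩ := Skey hμ hGc1 hGcRoot hg
  obtain ⟨hg0, hggc⟩ := hg
  rw [Real.dist_eq, abs_of_neg (by linarith : g - gc < 0)] at hdist
  have hgy0 : psi μ y0 < g := by linarith
  set S := ∑' n : ℕ, alphaCoeff μ n * g ^ n with hSdef
  have hSy0 : y0 < S := by
    by_contra hcon
    push_neg at hcon
    have := hmono.monotoneOn (Set.mem_Icc.mpr ⟨by linarith, hSG.le⟩)
      (Set.mem_Icc.mpr ⟨hy01, hy0G.le⟩) hcon
    rw [hpsiS] at this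
    linarith
  rw [Real.dist_eq, abs_of_neg (by linarith : S - Gc < 0)]
  have : Gc - y0 = ε' := by simp [hy0def]
  linarith

end main

end GLOaux

open GLOaux

/-- Square-root singularity of the leading-order two-point function: as
`g → g_c(μ)⁻`, the quotient `(G_c(μ) − S_μ(g)) / √(1 − g/g_c(μ))` tends to
`K(μ) = √(G_c²·(G_c² + μ)/(6G_c² + μ)) > 0`. -/
theorem GLO_sqrt_singularity (μ : ℝ) (hμ : 0 ≤ μ) (Gc : ℝ) (hGc1 : 1 < Gc)
    (hGcRoot : -3 * Gc ^ 3 + 4 * Gc ^ 2 - μ * Gc + 2 * μ = 0)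
    (gc : ℝ) (hgc : gc = (Gc - 1) / (Gc ^ 2 * (Gc ^ 2 + μ)))
    (K : ℝ) (hK : K = Real.sqrt (Gc ^ 2 * (Gc ^ 2 + μ) / (6 * Gc ^ 2 + μ))) :
    0 < K ∧
      Tendsto
        (fun g : ℝ =>
          (Gc - ∑' n : ℕ, alphaCoeff μ n * g ^ n) / Real.sqrt (1 - g / gc))
        (nhdsWithin gc (Set.Iio gc)) (nhds K) := by
  have hGc0 : 0 < Gc := by linarith
  have hGm1 : 0 < Gc - 1 := by linarith
  have hGsq : 0 < Gc^2 := by positivity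
  have hDC : 0 < Gc^2 * (Gc^2 + μ) := mul_pos hGsq (by linarith)
  have h6 : 0 < 6*Gc^2 + μ := by linarith
  have hgcpos : 0 < gc := hgc ▸ div_pos hGm1 hDC
  constructor
  · rw [hK]
    exact Real.sqrt_pos.mpr (div_pos hDC h6)
  · rw [← nhdsWithin_Ioo_eq_nhdsLT hgcpos]
    set h : ℝ → ℝ := fun y =>
      Real.sqrt ((Gc-1)*(y^4+μ*y^2) / ((Gc-1)*y^2 + 2*Gc*(Gc-1)*y + (Gc^2+μ))) with hhdef
    have hQ2Gc : ((Gc-1)*Gc^2 + 2*Gc*(Gc-1)*Gc + (Gc^2+μ)) ≠ 0 := by nlinarith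
    have hval : h Gc = K := by
      rw [hK, hhdef]
      simp only
      congr 1
      rw [div_eq_div_iff hQ2Gc h6.ne']
      linear_combination (-(Gc^4) - μ*Gc^2) * hGcRoot
    have hcont : ContinuousAt h Gc := by
      apply ContinuousAt.comp Real.continuous_sqrt.continuousAt
      exact ContinuousAt.div (by fun_prop) (by fun_prop) hQ2Gc
    have hStend := Stendsto (Gc := Gc) hμ hGc1 hGcRoot
    rw [← hgc] at hStend
    have htend : Filter.Tendsto (fun g : ℝ => h (∑' n : ℕ, alphaCoeff μ n * g ^ n))
        (nhdsWithin gc (Set.Ioo 0 gc)) (nhds K) := by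
      have h1 : Filter.Tendsto h (nhds Gc) (nhds K) := by
        rw [← hval]
        exact hcont.tendsto
      exact h1.comp hStend
    refine tendsto_nhdsWithin_congr ?_ htend
    intro g hg
    have hg' : g ∈ Set.Ioo 0 ((Gc - 1) / (Gc ^ 2 * (Gc ^ 2 + μ))) := by rwa [← hgc]
    obtain ⟨hS1, hSG, hpsiS⟩ := Skey hμ hGc1 hGcRoot hg'
    obtain ⟨hg0, hggc⟩ := hg
    set S := ∑' n : ℕ, alphaCoeff μ n * g ^ n with hSdef
    have hS0 : 0 < S := by linarith
    have hDS : 0 < S^4 + μ*S^2 := Dpos hμ S hS0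
    have hGcS : 0 < Gc - S := by linarith
    have hQ2S : 0 < (Gc-1)*S^2 + 2*Gc*(Gc-1)*S + (Gc^2+μ) := by nlinarith
    have hgeq : g = (S - 1)/(S^4 + μ*S^2) := by rw [← hpsiS, psi]
    have e0 : 1 - g/gc = ((Gc-1)*(S^4+μ*S^2) - (S-1)*(Gc^2*(Gc^2+μ)))
        / ((Gc-1)*(S^4+μ*S^2)) := by
      rw [hgeq, hgc]
      field_simp
    have hNid : (Gc-1)*(S^4+μ*S^2) - (S-1)*(Gc^2*(Gc^2+μ))
        = (Gc-S)^2 * ((Gc-1)*S^2 + 2*Gc*(Gc-1)*S + (Gc^2+μ)) := by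
      linear_combination (Gc*S - S^2) * hGcRoot
    have e1 : 1 - g/gc = (Gc-S)^2
        * (((Gc-1)*S^2 + 2*Gc*(Gc-1)*S + (Gc^2+μ)) / ((Gc-1)*(S^4+μ*S^2))) := by
      rw [e0, hNid, mul_div_assoc]
    have hRpos : 0 < ((Gc-1)*S^2 + 2*Gc*(Gc-1)*S + (Gc^2+μ)) / ((Gc-1)*(S^4+μ*S^2)) :=
      div_pos hQ2S (mul_pos hGm1 hDS)
    have hsq : Real.sqrt (1 - g/gc)
        = (Gc-S) * Real.sqrt (((Gc-1)*S^2 + 2*Gc*(Gc-1)*S + (Gc^2+μ)) / ((Gc-1)*(S^4+μ*S^2))) := by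
      rw [e1, Real.sqrt_mul (sq_nonneg _), Real.sqrt_sq hGcS.le]
    rw [hsq, ← div_div, div_self hGcS.ne', hhdef]
    simp only
    rw [show (Gc-1)*(S^4+μ*S^2) / ((Gc-1)*S^2 + 2*Gc*(Gc-1)*S + (Gc^2+μ))
        = ((((Gc-1)*S^2 + 2*Gc*(Gc-1)*S + (Gc^2+μ)) / ((Gc-1)*(S^4+μ*S^2))))⁻¹ from by
      rw [inv_div]]
    rw [Real.sqrt_inv, one_div]
end

section
/- Let μ ≥ 0 be real, let G_c(μ) be the unique real root x > 1 of −3x³ + 4x² − μx + 2μ = 0, and set g_c(μ) = (G_c(μ) − 1)/(G_c(μ)²·(G_c(μ)² + μ)). Then the series ∑_{n=0}^{∞} α_n(μ)·g_c(μ)^n converges and its sum equals G_c(μ). -/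
set_option maxHeartbeats 1000000

open Finset

/-- Number of plane forests of `m` trees with `p` 4-ary and `q` 2-ary internal nodes. -/
noncomputable def Fc (m p q : ℕ) : ℝ :=
  if m = 0 then (if p = 0 ∧ q = 0 then 1 else 0)
  else (m * Nat.factorial (4*p+2*q+m-1) : ℕ) /
    ((Nat.factorial p * Nat.factorial q * Nat.factorial (3*p+q+m) : ℕ) : ℝ)

lemma Fc_nonneg (m p q : ℕ) : 0 ≤ Fc m p q := by
  unfold Fc
  split
  · split <;> norm_num
  · positivity

lemma Fc_eq (m p q : ℕ) (h : m ≠ 0 ∨ p ≠ 0 ∨ q ≠ 0) :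
    Fc m p q = (m * Nat.factorial (4*p+2*q+m-1) : ℕ) /
      ((Nat.factorial p * Nat.factorial q * Nat.factorial (3*p+q+m) : ℕ) : ℝ) := by
  unfold Fc
  split
  · rename_i hm
    subst hm
    simp only [Nat.zero_mul, Nat.cast_zero, zero_div]
    split
    · rename_i hpq; rcases h with h | h | h <;> simp_all
    · rfl
  · rfl

lemma Fc_zero_ne (p q : ℕ) (h : p ≠ 0 ∨ q ≠ 0) : Fc 0 p q = 0 := by
  unfold Fc
  rw [if_pos rfl, if_neg (by tauto)]

lemma Fc_zero_zero (m : ℕ) : Fc m 0 0 = 1 := by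
  rcases m with _ | M
  · simp [Fc]
  · rw [Fc_eq _ _ _ (Or.inl (by omega))]
    have h1 : 4*0+2*0+(M+1)-1 = M := by omega
    have h2 : 3*0+0+(M+1) = M+1 := by omega
    rw [h1, h2]
    rw [Nat.factorial_succ]
    push_cast
    rw [Nat.factorial_zero]
    have : (Nat.factorial M : ℝ) ≠ 0 := Nat.cast_ne_zero.mpr (Nat.factorial_ne_zero M)
    field_simp
    norm_num

lemma cast_div_mul (a b k : ℕ) (hb : b ≠ 0) (hk : k ≠ 0) :
    ((a:ℝ))/(b:ℝ) = ((a*k : ℕ):ℝ)/((b*k : ℕ):ℝ) := by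
  push_cast
  rw [mul_div_mul_right _ _ (by exact_mod_cast hk)]

lemma Fc_rec_pq (M P Q : ℕ) :
    Fc (M+1) (P+1) (Q+1) = Fc M (P+1) (Q+1) + Fc (M+4) P (Q+1) + Fc (M+2) (P+1) Q := by
  rw [Fc_eq (M+1) (P+1) (Q+1) (Or.inl (by omega)),
      Fc_eq M (P+1) (Q+1) (Or.inr (Or.inl (by omega))),
      Fc_eq (M+4) P (Q+1) (Or.inl (by omega)),
      Fc_eq (M+2) (P+1) Q (Or.inl (by omega))]
  have e1 : 4*(P+1)+2*(Q+1)+(M+1)-1 = 4*P+2*Q+M+6 := by omega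
  have e2 : 3*(P+1)+(Q+1)+(M+1) = 3*P+Q+M+5 := by omega
  have e3 : 4*(P+1)+2*(Q+1)+M-1 = 4*P+2*Q+M+5 := by omega
  have e4 : 3*(P+1)+(Q+1)+M = 3*P+Q+M+4 := by omega
  have e5 : 4*P+2*(Q+1)+(M+4)-1 = 4*P+2*Q+M+5 := by omega
  have e6 : 3*P+(Q+1)+(M+4) = 3*P+Q+M+5 := by omega
  have e7 : 4*(P+1)+2*Q+(M+2)-1 = 4*P+2*Q+M+5 := by omega
  have e8 : 3*(P+1)+Q+(M+2) = 3*P+Q+M+5 := by omega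
  rw [e1, e2, e3, e4, e5, e6, e7, e8]
  rw [cast_div_mul (M * Nat.factorial (4*P+2*Q+M+5))
      (Nat.factorial (P+1) * Nat.factorial (Q+1) * Nat.factorial (3*P+Q+M+4))
      (3*P+Q+M+5)
      (by positivity) (by omega),
    cast_div_mul ((M+4) * Nat.factorial (4*P+2*Q+M+5))
      (Nat.factorial P * Nat.factorial (Q+1) * Nat.factorial (3*P+Q+M+5))
      (P+1) (by positivity) (by omega),
    cast_div_mul ((M+2) * Nat.factorial (4*P+2*Q+M+5))
      (Nat.factorial (P+1) * Nat.factorial Q * Nat.factorial (3*P+Q+M+5))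
      (Q+1) (by positivity) (by omega)]
  have hd1 : (Nat.factorial (P+1) * Nat.factorial (Q+1) * Nat.factorial (3*P+Q+M+4))
      * (3*P+Q+M+5)
      = Nat.factorial (P+1) * Nat.factorial (Q+1) * Nat.factorial (3*P+Q+M+5) := by
    have : (3*P+Q+M+5) = (3*P+Q+M+4)+1 := by omega
    rw [this, Nat.factorial_succ (3*P+Q+M+4)]
    ring
  have hd2 : (Nat.factorial P * Nat.factorial (Q+1) * Nat.factorial (3*P+Q+M+5)) * (P+1)
      = Nat.factorial (P+1) * Nat.factorial (Q+1) * Nat.factorial (3*P+Q+M+5) := by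
    rw [Nat.factorial_succ P]
    ring
  have hd3 : (Nat.factorial (P+1) * Nat.factorial Q * Nat.factorial (3*P+Q+M+5)) * (Q+1)
      = Nat.factorial (P+1) * Nat.factorial (Q+1) * Nat.factorial (3*P+Q+M+5) := by
    rw [Nat.factorial_succ Q]
    ring
  rw [hd1, hd2, hd3, ← add_div, ← add_div, ← Nat.cast_add, ← Nat.cast_add]
  congr 1
  have hN : Nat.factorial (4*P+2*Q+M+6) = (4*P+2*Q+M+6) * Nat.factorial (4*P+2*Q+M+5) := by
    have : (4*P+2*Q+M+6) = (4*P+2*Q+M+5)+1 := by omega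
    rw [this, Nat.factorial_succ (4*P+2*Q+M+5)]
  rw [hN]
  ring

lemma Fc_rec_p0 (M P : ℕ) :
    Fc (M+1) (P+1) 0 = Fc M (P+1) 0 + Fc (M+4) P 0 := by
  rw [Fc_eq (M+1) (P+1) 0 (Or.inl (by omega)),
      Fc_eq M (P+1) 0 (Or.inr (Or.inl (by omega))),
      Fc_eq (M+4) P 0 (Or.inl (by omega))]
  have e1 : 4*(P+1)+2*0+(M+1)-1 = 4*P+M+4 := by omega
  have e2 : 3*(P+1)+0+(M+1) = 3*P+M+4 := by omega
  have e3 : 4*(P+1)+2*0+M-1 = 4*P+M+3 := by omega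
  have e4 : 3*(P+1)+0+M = 3*P+M+3 := by omega
  have e5 : 4*P+2*0+(M+4)-1 = 4*P+M+3 := by omega
  have e6 : 3*P+0+(M+4) = 3*P+M+4 := by omega
  rw [e1, e2, e3, e4, e5, e6]
  rw [cast_div_mul (M * Nat.factorial (4*P+M+3))
      (Nat.factorial (P+1) * Nat.factorial 0 * Nat.factorial (3*P+M+3)) (3*P+M+4)
      (by positivity) (by omega),
    cast_div_mul ((M+4) * Nat.factorial (4*P+M+3))
      (Nat.factorial P * Nat.factorial 0 * Nat.factorial (3*P+M+4)) (P+1)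
      (by positivity) (by omega)]
  have hd1 : (Nat.factorial (P+1) * Nat.factorial 0 * Nat.factorial (3*P+M+3)) * (3*P+M+4)
      = Nat.factorial (P+1) * Nat.factorial 0 * Nat.factorial (3*P+M+4) := by
    have : (3*P+M+4) = (3*P+M+3)+1 := by omega
    rw [this, Nat.factorial_succ (3*P+M+3)]
    ring
  have hd2 : (Nat.factorial P * Nat.factorial 0 * Nat.factorial (3*P+M+4)) * (P+1)
      = Nat.factorial (P+1) * Nat.factorial 0 * Nat.factorial (3*P+M+4) := by
    rw [Nat.factorial_succ P]
    ring
  rw [hd1, hd2, ← add_div, ← Nat.cast_add]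
  congr 1
  have hN : Nat.factorial (4*P+M+4) = (4*P+M+4) * Nat.factorial (4*P+M+3) := by
    have : (4*P+M+4) = (4*P+M+3)+1 := by omega
    rw [this, Nat.factorial_succ (4*P+M+3)]
  rw [hN]
  ring

lemma Fc_rec_0q (M Q : ℕ) :
    Fc (M+1) 0 (Q+1) = Fc M 0 (Q+1) + Fc (M+2) 0 Q := by
  rw [Fc_eq (M+1) 0 (Q+1) (Or.inl (by omega)),
      Fc_eq M 0 (Q+1) (Or.inr (Or.inr (by omega))),
      Fc_eq (M+2) 0 Q (Or.inl (by omega))]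
  have e1 : 4*0+2*(Q+1)+(M+1)-1 = 2*Q+M+2 := by omega
  have e2 : 3*0+(Q+1)+(M+1) = Q+M+2 := by omega
  have e3 : 4*0+2*(Q+1)+M-1 = 2*Q+M+1 := by omega
  have e4 : 3*0+(Q+1)+M = Q+M+1 := by omega
  have e5 : 4*0+2*Q+(M+2)-1 = 2*Q+M+1 := by omega
  have e6 : 3*0+Q+(M+2) = Q+M+2 := by omega
  rw [e1, e2, e3, e4, e5, e6]
  rw [cast_div_mul (M * Nat.factorial (2*Q+M+1))
      (Nat.factorial 0 * Nat.factorial (Q+1) * Nat.factorial (Q+M+1)) (Q+M+2)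
      (by positivity) (by omega),
    cast_div_mul ((M+2) * Nat.factorial (2*Q+M+1))
      (Nat.factorial 0 * Nat.factorial Q * Nat.factorial (Q+M+2)) (Q+1)
      (by positivity) (by omega)]
  have hd1 : (Nat.factorial 0 * Nat.factorial (Q+1) * Nat.factorial (Q+M+1)) * (Q+M+2)
      = Nat.factorial 0 * Nat.factorial (Q+1) * Nat.factorial (Q+M+2) := by
    have : (Q+M+2) = (Q+M+1)+1 := by omega
    rw [this, Nat.factorial_succ (Q+M+1)]
    ring
  have hd2 : (Nat.factorial 0 * Nat.factorial Q * Nat.factorial (Q+M+2)) * (Q+1)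
      = Nat.factorial 0 * Nat.factorial (Q+1) * Nat.factorial (Q+M+2) := by
    rw [Nat.factorial_succ Q]
    ring
  rw [hd1, hd2, ← add_div, ← Nat.cast_add]
  congr 1
  have hN : Nat.factorial (2*Q+M+2) = (2*Q+M+2) * Nat.factorial (2*Q+M+1) := by
    have : (2*Q+M+2) = (2*Q+M+1)+1 := by omega
    rw [this, Nat.factorial_succ (2*Q+M+1)]
  rw [hN]
  ring

/-- `Ac μ m n` : coefficient of `g^n` in the `m`-th power of the tree generating function. -/
noncomputable def Ac (μ : ℝ) (m n : ℕ) : ℝ :=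
  ∑ q ∈ Finset.range (n+1), μ^q * Fc m (n-q) q

lemma Ac_n_zero (μ : ℝ) (m : ℕ) : Ac μ m 0 = 1 := by
  simp [Ac, Fc_zero_zero]

lemma Ac_zero_succ (μ : ℝ) (n : ℕ) : Ac μ 0 (n+1) = 0 := by
  unfold Ac
  apply Finset.sum_eq_zero
  intro q hq
  rw [Fc_zero_ne]
  · ring
  · omega

lemma Ac_nonneg (μ : ℝ) (hμ : 0 ≤ μ) (m n : ℕ) : 0 ≤ Ac μ m n := by
  apply Finset.sum_nonneg
  intro q _
  exact mul_nonneg (pow_nonneg hμ q) (Fc_nonneg _ _ _)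

lemma Ac_rec (μ : ℝ) (M n : ℕ) :
    Ac μ (M+1) (n+1) = Ac μ M (n+1) + Ac μ (M+4) n + μ * Ac μ (M+2) n := by
  have key : ∀ q ∈ Finset.range (n+2),
      μ^q * Fc (M+1) (n+1-q) q =
        μ^q * Fc M (n+1-q) q + (if q ≤ n then μ^q * Fc (M+4) (n-q) q else 0) +
          (if q = 0 then 0 else μ^q * Fc (M+2) (n+1-q) (q-1)) := by
    intro q hq
    rw [Finset.mem_range] at hq
    rcases q with _ | Q
    · simp only [Nat.sub_zero, if_pos (Nat.zero_le n), reduceIte, add_zero]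
      rw [Fc_rec_p0 M n]
      ring
    · rcases Nat.lt_or_ge Q n with hQ | hQ
      · -- Q+1 ≤ n, p ≥ 1
        have e1 : n + 1 - (Q+1) = (n - (Q+1)) + 1 := by omega
        rw [e1, if_pos (by omega : Q+1 ≤ n), if_neg (by omega : ¬ Q+1 = 0)]
        have e2 : Q + 1 - 1 = Q := by omega
        rw [e2, Fc_rec_pq M (n - (Q+1)) Q]
        ring
      · -- q = n+1
        have hq' : Q = n := by omega
        subst hq'
        have e1 : Q + 1 - (Q+1) = 0 := by omega
        rw [e1, if_neg (by omega : ¬ Q+1 ≤ Q), if_neg (by omega : ¬ Q+1 = 0)]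
        have e2 : Q + 1 - 1 = Q := by omega
        rw [e2, Fc_rec_0q M Q]
        ring
  unfold Ac
  rw [Finset.sum_congr rfl key, Finset.sum_add_distrib, Finset.sum_add_distrib]
  congr 1
  · congr 1
    rw [Finset.sum_range_succ, if_neg (by omega : ¬ n+1 ≤ n), add_zero]
    apply Finset.sum_congr rfl
    intro q hq
    rw [Finset.mem_range] at hq
    rw [if_pos (by omega : q ≤ n)]
  · rw [Finset.sum_range_succ', if_pos rfl, add_zero, Finset.mul_sum]
    apply Finset.sum_congr rfl
    intro q hq
    rw [Finset.mem_range] at hq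
    rw [if_neg (by omega : ¬ q+1 = 0)]
    have e1 : n + 1 - (q+1) = n - q := by omega
    have e2 : q + 1 - 1 = q := by omega
    rw [e1, e2, pow_succ]
    ring

lemma alpha_eq_Ac (μ : ℝ) (n : ℕ) : alphaCoeff μ n = Ac μ 1 n := by
  unfold alphaCoeff Ac
  apply Finset.sum_congr rfl
  intro q hq
  rw [Finset.mem_range] at hq
  have hqn : q ≤ n := by omega
  rw [Fc_eq 1 (n-q) q (Or.inl (by omega))]
  have e1 : 4*(n-q)+2*q+1-1 = 4*n-2*q := by omega
  have e2 : 3*(n-q)+q+1 = (3*n-2*q)+1 := by omega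
  rw [e1, e2]
  rw [Nat.cast_choose ℝ hqn, Nat.cast_choose ℝ (by omega : n ≤ 4*n-2*q)]
  have e3 : 4*n-2*q-n = 3*n-2*q := by omega
  rw [e3]
  have hR : (3*(n:ℝ) - 2*(q:ℝ) + 1) = ((3*n-2*q : ℕ) : ℝ) + 1 := by
    have : (2:ℕ)*q ≤ 3*n := by omega
    push_cast [Nat.cast_sub this]
    ring
  rw [hR, Nat.factorial_succ]
  have h1 : (Nat.factorial n : ℝ) ≠ 0 := Nat.cast_ne_zero.mpr (Nat.factorial_ne_zero _)
  have h2 : (Nat.factorial q : ℝ) ≠ 0 := Nat.cast_ne_zero.mpr (Nat.factorial_ne_zero _)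
  have h3 : (Nat.factorial (n-q) : ℝ) ≠ 0 := Nat.cast_ne_zero.mpr (Nat.factorial_ne_zero _)
  have h4 : (Nat.factorial (3*n-2*q) : ℝ) ≠ 0 := Nat.cast_ne_zero.mpr (Nat.factorial_ne_zero _)
  have h5 : ((3*n-2*q : ℕ) : ℝ) + 1 ≠ 0 := by positivity
  push_cast
  field_simp

/-- The convolution identity: `Ac a * Ac b = Ac (a+b)` (Cauchy convolution in `n`). -/
lemma Ac_conv_aux (μ : ℝ) : ∀ k a b n, a + 5*n ≤ k →
    (∑ i ∈ Finset.range (n+1), Ac μ a i * Ac μ b (n-i)) = Ac μ (a+b) n := by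
  intro k
  induction k with
  | zero =>
    intro a b n h
    have ha : a = 0 := by omega
    have hn : n = 0 := by omega
    subst ha hn
    simp [Ac_n_zero]
  | succ K IH =>
    intro a b n h
    rcases a with _ | M
    · -- a = 0
      rw [Finset.sum_eq_single_of_mem 0 (Finset.mem_range.mpr (by omega))]
      · rw [Ac_n_zero, Nat.sub_zero, one_mul, Nat.zero_add]
      · intro i hi hi0
        rcases i with _ | I
        · omega
        · rw [Ac_zero_succ, zero_mul]
    · rcases n with _ | N
      · simp [Ac_n_zero]
      · -- a = M+1, n = N+1
        rw [Finset.sum_range_succ']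
        simp only [Nat.sub_zero]
        have step : ∀ i ∈ Finset.range (N+1),
            Ac μ (M+1) (i+1) * Ac μ b (N+1-(i+1)) =
              Ac μ M (i+1) * Ac μ b (N-i) + Ac μ (M+4) i * Ac μ b (N-i)
                + μ * (Ac μ (M+2) i * Ac μ b (N-i)) := by
          intro i _
          have e : N+1-(i+1) = N-i := by omega
          rw [e, Ac_rec]
          ring
        rw [Finset.sum_congr rfl step, Finset.sum_add_distrib, Finset.sum_add_distrib,
            ← Finset.mul_sum]
        have h4 : (∑ i ∈ Finset.range (N+1), Ac μ (M+4) i * Ac μ b (N-i)) = Ac μ (M+4+b) N :=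
          IH (M+4) b N (by omega)
        have h2 : (∑ i ∈ Finset.range (N+1), Ac μ (M+2) i * Ac μ b (N-i)) = Ac μ (M+2+b) N :=
          IH (M+2) b N (by omega)
        have hM : (∑ i ∈ Finset.range (N+2), Ac μ M i * Ac μ b (N+1-i)) = Ac μ (M+b) (N+1) :=
          IH M b (N+1) (by omega)
        rw [Finset.sum_range_succ'] at hM
        simp only [Nat.sub_zero] at hM
        have e0 : ∀ i ∈ Finset.range (N+1),
            Ac μ M (i+1) * Ac μ b (N+1-(i+1)) = Ac μ M (i+1) * Ac μ b (N-i) := by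
          intro i _
          have e : N+1-(i+1) = N-i := by omega
          rw [e]
        rw [Finset.sum_congr rfl e0] at hM
        have hMsum : (∑ i ∈ Finset.range (N+1), Ac μ M (i+1) * Ac μ b (N-i)) =
            Ac μ (M+b) (N+1) - Ac μ M 0 * Ac μ b (N+1) := by linarith [hM]
        rw [h4, h2, hMsum, Ac_n_zero, Ac_n_zero]
        have goal_eq : M+1+b = (M+b)+1 := by omega
        rw [goal_eq, Ac_rec μ (M+b) N]
        have e4 : M+b+4 = M+4+b := by omega
        have e2' : M+b+2 = M+2+b := by omega
        rw [e4, e2']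
        ring

lemma Ac_conv (μ : ℝ) (a b n : ℕ) :
    (∑ i ∈ Finset.range (n+1), Ac μ a i * Ac μ b (n-i)) = Ac μ (a+b) n :=
  Ac_conv_aux μ (a + 5*n) a b n le_rfl

lemma sum_conv_le (u v : ℕ → ℝ) (hu : ∀ n, 0 ≤ u n) (hv : ∀ n, 0 ≤ v n)
    (x : ℝ) (hx : 0 ≤ x) (N : ℕ) :
    ∑ n ∈ Finset.range N, (∑ i ∈ Finset.range (n+1), u i * v (n-i)) * x^n ≤
      (∑ n ∈ Finset.range N, u n * x^n) * (∑ n ∈ Finset.range N, v n * x^n) := by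
  have hterm : ∀ n ∈ Finset.range N,
      (∑ i ∈ Finset.range (n+1), u i * v (n-i)) * x^n =
        ∑ i ∈ Finset.range (n+1), (u i * x^i) * (v (n-i) * x^(n-i)) := by
    intro n _
    rw [Finset.sum_mul]
    apply Finset.sum_congr rfl
    intro i hi
    rw [Finset.mem_range] at hi
    have : x^i * x^(n-i) = x^n := by
      rw [← pow_add]
      congr 1
      omega
    rw [← this, mul_mul_mul_comm]
  rw [Finset.sum_congr rfl hterm, Finset.sum_mul_sum]
  rw [Finset.sum_sigma']
  have heq : (∑ p ∈ ((Finset.range N) ×ˢ (Finset.range N)).filter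
        (fun p => p.1 + p.2 < N), (u p.1 * x^p.1) * (v p.2 * x^p.2)) =
      ∑ p ∈ (Finset.range N).sigma (fun n => Finset.range (n+1)),
        (u p.2 * x^p.2) * (v (p.1 - p.2) * x^(p.1 - p.2)) := by
    apply Finset.sum_nbij' (fun p => (⟨p.1 + p.2, p.1⟩ : Σ _ : ℕ, ℕ))
      (fun s => (s.2, s.1 - s.2))
    · intro p hp
      simp only [Finset.mem_filter, Finset.mem_product, Finset.mem_range] at hp
      simp only [Finset.mem_sigma, Finset.mem_range]
      omega
    · intro s hs
      simp only [Finset.mem_sigma, Finset.mem_range] at hs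
      simp only [Finset.mem_filter, Finset.mem_product, Finset.mem_range]
      omega
    · intro p hp
      simp only [Finset.mem_filter, Finset.mem_product, Finset.mem_range] at hp
      simp only [Nat.add_sub_cancel_left]
    · intro s hs
      simp only [Finset.mem_sigma, Finset.mem_range] at hs
      ext
      · simp; omega
      · simp
    · intro p hp
      simp only [Finset.mem_filter, Finset.mem_product, Finset.mem_range] at hp
      simp only [Nat.add_sub_cancel_left]
  rw [← heq, ← Finset.sum_product']
  apply Finset.sum_le_sum_of_subset_of_nonneg
  · exact Finset.filter_subset _ _
  · intro p _ _
    have := hu p.1; have := hv p.2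
    positivity

lemma T_bound (μ gc Gc : ℝ) (hμ : 0 ≤ μ) (hgc0 : 0 ≤ gc) (hGc : 1 ≤ Gc)
    (hfix : 1 + gc*(Gc^4 + μ*Gc^2) = Gc) :
    ∀ N, (∑ n ∈ Finset.range N, Ac μ 1 n * gc^n) ≤ Gc
      ∧ (∑ n ∈ Finset.range N, Ac μ 2 n * gc^n) ≤ Gc^2
      ∧ (∑ n ∈ Finset.range N, Ac μ 4 n * gc^n) ≤ Gc^4 := by
  have hnn : ∀ m N, 0 ≤ ∑ n ∈ Finset.range N, Ac μ m n * gc^n := by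
    intro m N
    apply Finset.sum_nonneg
    intro n _
    exact mul_nonneg (Ac_nonneg μ hμ m n) (pow_nonneg hgc0 n)
  have conv_le : ∀ (a b : ℕ) (N : ℕ),
      (∑ n ∈ Finset.range N, Ac μ (a+b) n * gc^n) ≤
        (∑ n ∈ Finset.range N, Ac μ a n * gc^n) * (∑ n ∈ Finset.range N, Ac μ b n * gc^n) := by
    intro a b N
    have := sum_conv_le (Ac μ a) (Ac μ b) (Ac_nonneg μ hμ a) (Ac_nonneg μ hμ b) gc hgc0 N
    calc (∑ n ∈ Finset.range N, Ac μ (a+b) n * gc^n)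
        = ∑ n ∈ Finset.range N, (∑ i ∈ Finset.range (n+1), Ac μ a i * Ac μ b (n-i)) * gc^n := by
          apply Finset.sum_congr rfl
          intro n _
          rw [Ac_conv]
      _ ≤ _ := this
  intro N
  induction N with
  | zero => simp; refine ⟨by linarith, by nlinarith, by nlinarith⟩
  | succ N IH =>
    obtain ⟨h1, _, _⟩ := IH
    -- bounds for N+1 for m = 2 and 4 follow from the m = 1 bound at N+1,
    -- so first prove the m = 1 bound at N+1.
    have h2N : (∑ n ∈ Finset.range N, Ac μ 2 n * gc^n) ≤ Gc^2 := by
      calc (∑ n ∈ Finset.range N, Ac μ 2 n * gc^n)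
          ≤ (∑ n ∈ Finset.range N, Ac μ 1 n * gc^n) *
              (∑ n ∈ Finset.range N, Ac μ 1 n * gc^n) := conv_le 1 1 N
        _ ≤ Gc^2 := by nlinarith [hnn 1 N]
    have h4N : (∑ n ∈ Finset.range N, Ac μ 4 n * gc^n) ≤ Gc^4 := by
      calc (∑ n ∈ Finset.range N, Ac μ 4 n * gc^n)
          ≤ (∑ n ∈ Finset.range N, Ac μ 2 n * gc^n) *
              (∑ n ∈ Finset.range N, Ac μ 2 n * gc^n) := conv_le 2 2 N
        _ ≤ Gc^4 := by nlinarith [hnn 2 N]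
    have h1succ : (∑ n ∈ Finset.range (N+1), Ac μ 1 n * gc^n) ≤ Gc := by
      rw [Finset.sum_range_succ']
      have hterm : ∀ i ∈ Finset.range N,
          Ac μ 1 (i+1) * gc^(i+1) =
            gc * (Ac μ 4 i * gc^i) + μ * gc * (Ac μ 2 i * gc^i) := by
        intro i _
        have : Ac μ 1 (i+1) = Ac μ 4 i + μ * Ac μ 2 i := by
          have := Ac_rec μ 0 i
          rw [Ac_zero_succ] at this
          linarith [this]
        rw [this, pow_succ]
        ring
      rw [Finset.sum_congr rfl hterm, Finset.sum_add_distrib, ← Finset.mul_sum, ← Finset.mul_sum]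
      rw [Ac_n_zero, pow_zero, mul_one]
      have e1 : gc * (∑ i ∈ Finset.range N, Ac μ 4 i * gc^i) ≤ gc * Gc^4 := by
        apply mul_le_mul_of_nonneg_left h4N hgc0
      have e2 : μ * gc * (∑ i ∈ Finset.range N, Ac μ 2 i * gc^i) ≤ μ * gc * Gc^2 := by
        apply mul_le_mul_of_nonneg_left h2N (by positivity)
      nlinarith [e1, e2]
    refine ⟨h1succ, ?_, ?_⟩
    · calc (∑ n ∈ Finset.range (N+1), Ac μ 2 n * gc^n)
          ≤ (∑ n ∈ Finset.range (N+1), Ac μ 1 n * gc^n) *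
              (∑ n ∈ Finset.range (N+1), Ac μ 1 n * gc^n) := conv_le 1 1 (N+1)
        _ ≤ Gc^2 := by nlinarith [hnn 1 (N+1)]
    · have h2succ : (∑ n ∈ Finset.range (N+1), Ac μ 2 n * gc^n) ≤ Gc^2 := by
        calc (∑ n ∈ Finset.range (N+1), Ac μ 2 n * gc^n)
            ≤ (∑ n ∈ Finset.range (N+1), Ac μ 1 n * gc^n) *
                (∑ n ∈ Finset.range (N+1), Ac μ 1 n * gc^n) := conv_le 1 1 (N+1)
          _ ≤ Gc^2 := by nlinarith [hnn 1 (N+1)]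
      calc (∑ n ∈ Finset.range (N+1), Ac μ 4 n * gc^n)
          ≤ (∑ n ∈ Finset.range (N+1), Ac μ 2 n * gc^n) *
              (∑ n ∈ Finset.range (N+1), Ac μ 2 n * gc^n) := conv_le 2 2 (N+1)
        _ ≤ Gc^4 := by nlinarith [hnn 2 (N+1)]

/-- For `μ ≥ 0`, the series `∑ α_n(μ) g_c(μ)^n` converges and its sum equals
the critical value `G_c(μ)`. -/
theorem GLO_at_critical_point (μ : ℝ) (hμ : 0 ≤ μ) (Gc : ℝ) (hGc1 : 1 < Gc)
    (hGcRoot : -3 * Gc ^ 3 + 4 * Gc ^ 2 - μ * Gc + 2 * μ = 0)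
    (gc : ℝ) (hgc : gc = (Gc - 1) / (Gc ^ 2 * (Gc ^ 2 + μ))) :
    Summable (fun n : ℕ => alphaCoeff μ n * gc ^ n) ∧
      (∑' n : ℕ, alphaCoeff μ n * gc ^ n) = Gc := by
  have hGc0 : (0:ℝ) < Gc := by linarith
  have hD : (0:ℝ) < Gc ^ 2 * (Gc ^ 2 + μ) := by positivity
  have hgc' : gc * (Gc ^ 2 * (Gc ^ 2 + μ)) = Gc - 1 := by
    rw [hgc]; field_simp
  have hgcpos : 0 < gc := by
    rw [hgc]; apply div_pos (by linarith) hD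
  have hfix : 1 + gc * (Gc ^ 4 + μ * Gc ^ 2) = Gc := by linear_combination hgc'
  have hE2' : (gc * (3*Gc^4 + μ*Gc^2) - 1) * (Gc ^ 2 * (Gc ^ 2 + μ)) = 0 := by
    linear_combination (3*Gc^4 + μ*Gc^2) * hgc' - Gc^2 * hGcRoot
  have hE2 : gc * (3*Gc^4 + μ*Gc^2) = 1 := by
    rcases mul_eq_zero.mp hE2' with h | h
    · linarith
    · exact absurd h hD.ne'
  have hE1' : (gc * (4*Gc^3 + 2*μ*Gc) - 1) * (Gc ^ 2 * (Gc ^ 2 + μ)) = 0 := by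
    linear_combination (4*Gc^3 + 2*μ*Gc) * hgc' - Gc * hGcRoot
  have hE1 : gc * (4*Gc^3 + 2*μ*Gc) = 1 := by
    rcases mul_eq_zero.mp hE1' with h | h
    · linarith
    · exact absurd h hD.ne'
  -- the three series
  set f1 : ℕ → ℝ := fun n => Ac μ 1 n * gc ^ n with hf1
  set f2 : ℕ → ℝ := fun n => Ac μ 2 n * gc ^ n with hf2
  set f4 : ℕ → ℝ := fun n => Ac μ 4 n * gc ^ n with hf4
  have hTb := T_bound μ gc Gc hμ hgcpos.le hGc1.le hfix
  have hnn1 : ∀ n, 0 ≤ f1 n := fun n =>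
    mul_nonneg (Ac_nonneg μ hμ 1 n) (pow_nonneg hgcpos.le n)
  have hnn2 : ∀ n, 0 ≤ f2 n := fun n =>
    mul_nonneg (Ac_nonneg μ hμ 2 n) (pow_nonneg hgcpos.le n)
  have hnn4 : ∀ n, 0 ≤ f4 n := fun n =>
    mul_nonneg (Ac_nonneg μ hμ 4 n) (pow_nonneg hgcpos.le n)
  have hsum1 : Summable f1 := summable_of_sum_range_le hnn1 (fun N => (hTb N).1)
  have hsum2 : Summable f2 := summable_of_sum_range_le hnn2 (fun N => (hTb N).2.1)
  have hsum4 : Summable f4 := summable_of_sum_range_le hnn4 (fun N => (hTb N).2.2)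
  have hnorm1 : Summable (fun n => ‖f1 n‖) := by
    have : (fun n => ‖f1 n‖) = f1 := funext fun n => Real.norm_of_nonneg (hnn1 n)
    rw [this]; exact hsum1
  have hnorm2 : Summable (fun n => ‖f2 n‖) := by
    have : (fun n => ‖f2 n‖) = f2 := funext fun n => Real.norm_of_nonneg (hnn2 n)
    rw [this]; exact hsum2
  set S : ℝ := ∑' n, f1 n with hS
  set S2 : ℝ := ∑' n, f2 n with hS2def
  set S4 : ℝ := ∑' n, f4 n with hS4def
  -- Cauchy products
  have cauchy_aux : ∀ (a b : ℕ) (n : ℕ),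
      (∑ k ∈ Finset.range (n+1), (Ac μ a k * gc^k) * (Ac μ b (n-k) * gc^(n-k))) =
        Ac μ (a+b) n * gc^n := by
    intro a b n
    rw [← Ac_conv μ a b n, Finset.sum_mul]
    apply Finset.sum_congr rfl
    intro k hk
    rw [Finset.mem_range] at hk
    have : gc^k * gc^(n-k) = gc^n := by
      rw [← pow_add]; congr 1; omega
    rw [mul_mul_mul_comm, this]
  have hS2eq : S2 = S * S := by
    rw [hS2def, hS, tsum_mul_tsum_eq_tsum_sum_range_of_summable_norm hnorm1 hnorm1]
    apply tsum_congr
    intro n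
    exact (cauchy_aux 1 1 n).symm
  have hS4eq : S4 = S2 * S2 := by
    rw [hS4def, hS2def, tsum_mul_tsum_eq_tsum_sum_range_of_summable_norm hnorm2 hnorm2]
    apply tsum_congr
    intro n
    exact (cauchy_aux 2 2 n).symm
  -- shift
  have hshift : S = 1 + (gc * S4 + μ * gc * S2) := by
    rw [hS, Summable.tsum_eq_zero_add hsum1]
    have h0 : f1 0 = 1 := by simp [hf1, Ac_n_zero]
    rw [h0]
    congr 1
    have hterm : ∀ n : ℕ, f1 (n+1) = gc * f4 n + (μ * gc) * f2 n := by
      intro n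
      simp only [hf1, hf2, hf4]
      have : Ac μ 1 (n+1) = Ac μ 4 n + μ * Ac μ 2 n := by
        have h := Ac_rec μ 0 n
        rw [Ac_zero_succ] at h
        linarith
      rw [this, pow_succ]
      ring
    calc (∑' n, f1 (n+1)) = ∑' n, (gc * f4 n + (μ * gc) * f2 n) := tsum_congr hterm
      _ = gc * S4 + μ * gc * S2 := by
          rw [Summable.tsum_add (hsum4.mul_left gc) (hsum2.mul_left (μ*gc)),
            tsum_mul_left, tsum_mul_left, hS4def, hS2def]
  have eqS : S = 1 + gc * ((S*S)*(S*S)) + μ * gc * (S*S) := by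
    rw [← hS2eq, ← hS4eq]; linarith [hshift]
  have hS1 : 1 ≤ S := by
    have h0 : f1 0 = 1 := by simp [hf1, Ac_n_zero]
    have := Summable.le_tsum hsum1 0 (fun j _ => hnn1 j)
    rw [h0] at this
    exact this
  have key : gc * (S - Gc)^2 * (S^2 + 2*S*Gc + 3*Gc^2 + μ) = 0 := by
    linear_combination (-1) * eqS + (-S) * hE1 + hE2
  have quad_pos : 0 < S^2 + 2*S*Gc + 3*Gc^2 + μ := by nlinarith
  have hSG : S = Gc := by
    have h2 : (S - Gc)^2 = 0 := by
      by_contra h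
      have h3 : 0 < (S - Gc)^2 := lt_of_le_of_ne (sq_nonneg _) (Ne.symm h)
      have h4 : 0 < gc * (S - Gc)^2 * (S^2 + 2*S*Gc + 3*Gc^2 + μ) :=
        mul_pos (mul_pos hgcpos h3) quad_pos
      linarith
    have := pow_eq_zero_iff (n := 2) (by norm_num) |>.mp h2
    linarith [sub_eq_zero.mp this]
  have hfun : (fun n : ℕ => alphaCoeff μ n * gc ^ n) = f1 := by
    funext n
    rw [hf1, alpha_eq_Ac]
  rw [hfun]
  exact ⟨hsum1, hSG⟩
end
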